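/- arXiv:2202.11387 — 4 statements merged into one kernel-verified Lean document; each statement's English description precedes it below -/
import Mathlib

section
/- Let N ≥ 2 and k ∈ ℝ, and define 𝒟 on {x ∈ ℝ^N : |x| ≥ 1} by 𝒟(x) = |x|^k (1 − |x|^{2−N−k}) if k > 2 − N, 𝒟(x) = |x|^{2−N} (1 − |x|^{k−2+N}) if k < 2 − N, and 𝒟(x) = |x|^{2−N} ln|x| if k = 2 − N. Then 𝒟 is nonnegative on {|x| ≥ 1}, satisfies L_k 𝒟(x) = Δ𝒟(x) − k div(𝒟 x/|x|²)(x) = 0 for every x with |x| > 1, and 𝒟(x) = 0 for every x with |x| = 1. -/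
open MeasureTheory Metric Set Function

noncomputable section

abbrev Euc (N : ℕ) : Type := EuclideanSpace ℝ (Fin N)

/-- The Laplacian of `g : Euc N → ℝ` at `x`, as the sum of second directional derivatives
along the standard orthonormal basis. -/
def lapl (N : ℕ) (g : Euc N → ℝ) (x : Euc N) : ℝ :=
  ∑ i : Fin N, fderiv ℝ (fun y => fderiv ℝ g y (EuclideanSpace.single i 1)) x
    (EuclideanSpace.single i 1)

/-- The divergence of a vector field `V : Euc N → Euc N` at `x`. -/
def diverg {N : ℕ} (V : Euc N → Euc N) (x : Euc N) : ℝ :=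
  ∑ i : Fin N, fderiv ℝ V x (EuclideanSpace.single i 1) i

/-- The operator `L_k v = Δ v − k div(v x/|x|²)`. -/
def Lk (N : ℕ) (k : ℝ) (v : Euc N → ℝ) (x : Euc N) : ℝ :=
  lapl N v x - k * diverg (fun y => (v y / ‖y‖ ^ 2) • y) x
/-- The function `𝒟` on the exterior domain. -/
def Dfun (N : ℕ) (k : ℝ) (x : Euc N) : ℝ :=
  if 2 - (N : ℝ) < k then ‖x‖ ^ k * (1 - ‖x‖ ^ (2 - (N : ℝ) - k))
  else if k < 2 - (N : ℝ) then ‖x‖ ^ (2 - (N : ℝ)) * (1 - ‖x‖ ^ (k - 2 + (N : ℝ)))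
  else ‖x‖ ^ (2 - (N : ℝ)) * Real.log ‖x‖
open Filter in
lemma Lk_radial (N : ℕ) (k : ℝ) (φ φ' φ'' χ χ' : ℝ → ℝ)
    (hφ : ∀ u : ℝ, 0 < u → HasDerivAt φ (φ' u) u)
    (hφ' : ∀ u : ℝ, 0 < u → HasDerivAt φ' (φ'' u) u)
    (hχdef : ∀ u : ℝ, 0 < u → χ u = φ u / u)
    (hχ : ∀ u : ℝ, 0 < u → HasDerivAt χ (χ' u) u)
    (x : Euc N) (hx : 0 < ‖x‖) :
    Lk N k (fun y => φ (‖y‖ ^ 2)) x =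
      4 * ‖x‖ ^ 2 * φ'' (‖x‖ ^ 2) + 2 * N * φ' (‖x‖ ^ 2)
        - k * (2 * ‖x‖ ^ 2 * χ' (‖x‖ ^ 2) + N * χ (‖x‖ ^ 2)) := by
  have hx0 : x ≠ 0 := by simpa using hx.ne'
  have hu0 : (0:ℝ) < ‖x‖ ^ 2 := by positivity
  set u : ℝ := ‖x‖ ^ 2 with hu
  -- derivative of the squared norm
  have hsq : ∀ y : Euc N, HasFDerivAt (fun z : Euc N => ‖z‖ ^ 2) (2 • innerSL ℝ y) y :=
    fun y => (hasStrictFDerivAt_norm_sq y).hasFDerivAt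
  have hsingle : ∀ (y : Euc N) (i : Fin N),
      (2 • innerSL ℝ y) (EuclideanSpace.single i 1) = 2 * y i := by
    intro y i
    simp [EuclideanSpace.inner_single_right]
  have hsum : ∑ i, (x i) ^ 2 = u := by
    rw [hu, EuclideanSpace.norm_eq, Real.sq_sqrt (Finset.sum_nonneg fun i _ => sq_nonneg _)]; simp [Real.norm_eq_abs, sq_abs]
  -- fderiv of φ ∘ sq away from 0
  have hf : ∀ y : Euc N, y ≠ 0 →
      HasFDerivAt (fun z : Euc N => φ (‖z‖ ^ 2)) (φ' (‖y‖ ^ 2) • (2 • innerSL ℝ y)) y := by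
    intro y hy
    exact (hφ _ (by have := norm_pos_iff.mpr hy; positivity)).comp_hasFDerivAt y (hsq y)
  -- Laplacian term
  have hlapl : ∀ i : Fin N,
      fderiv ℝ (fun y => fderiv ℝ (fun z : Euc N => φ (‖z‖ ^ 2)) y (EuclideanSpace.single i 1)) x
        (EuclideanSpace.single i 1) = 2 * φ' u + 4 * φ'' u * (x i) ^ 2 := by
    intro i
    have hG : (fun y => fderiv ℝ (fun z : Euc N => φ (‖z‖ ^ 2)) y (EuclideanSpace.single i 1))
        =ᶠ[nhds x] (fun y => φ' (‖y‖ ^ 2) * (2 * y i)) := by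
      filter_upwards [eventually_ne_nhds hx0] with y hy
      rw [(hf y hy).fderiv]
      simp [hsingle]
    rw [hG.fderiv_eq]
    have hc : HasFDerivAt (fun y : Euc N => φ' (‖y‖ ^ 2)) (φ'' u • (2 • innerSL ℝ x)) x :=
      (hφ' _ hu0).comp_hasFDerivAt x (hsq x)
    have hd : HasFDerivAt (fun y : Euc N => (2:ℝ) * y i)
        ((2:ℝ) • (EuclideanSpace.proj i : Euc N →L[ℝ] ℝ)) x :=
      ((EuclideanSpace.proj i : Euc N →L[ℝ] ℝ).hasFDerivAt).const_mul 2
    rw [show (fun y : Euc N => φ' (‖y‖ ^ 2) * (2 * y i)) = (fun y : Euc N => φ' (‖y‖ ^ 2)) * (fun y : Euc N => (2:ℝ) * y i) from rfl, (hc.mul hd).fderiv]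
    simp [hsingle, EuclideanSpace.inner_single_right]
    ring
  -- divergence term
  have hdiv : ∀ i : Fin N,
      fderiv ℝ (fun y : Euc N => (φ (‖y‖ ^ 2) / ‖y‖ ^ 2) • y) x (EuclideanSpace.single i 1) i
        = χ u + 2 * χ' u * (x i) ^ 2 := by
    intro i
    have hVW : (fun y : Euc N => (φ (‖y‖ ^ 2) / ‖y‖ ^ 2) • y)
        =ᶠ[nhds x] (fun y : Euc N => χ (‖y‖ ^ 2) • y) := by
      filter_upwards [eventually_ne_nhds hx0] with y hy
      rw [hχdef _ (by have := norm_pos_iff.mpr hy; positivity)]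
    rw [hVW.fderiv_eq]
    have hc : HasFDerivAt (fun y : Euc N => χ (‖y‖ ^ 2)) (χ' u • (2 • innerSL ℝ x)) x :=
      (hχ _ hu0).comp_hasFDerivAt x (hsq x)
    have hW : HasFDerivAt (fun y : Euc N => χ (‖y‖ ^ 2) • y)
        (χ u • (ContinuousLinearMap.id ℝ (Euc N)) + (χ' u • (2 • innerSL ℝ x)).smulRight x) x :=
      hc.smul (hasFDerivAt_id x)
    rw [hW.fderiv]
    simp [hsingle, PiLp.smul_apply, PiLp.add_apply, smul_eq_mul]
    ring
  unfold Lk lapl diverg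
  simp only [hlapl, hdiv]
  rw [Finset.sum_add_distrib, Finset.sum_add_distrib, Finset.sum_const, ← Finset.mul_sum,
    ← Finset.mul_sum, hsum]
  simp [Finset.card_univ]
  ring

lemma Lk_congr (N : ℕ) (k : ℝ) {f g : Euc N → ℝ} {x : Euc N} (h : f =ᶠ[nhds x] g) :
    Lk N k f x = Lk N k g x := by
  unfold Lk lapl diverg
  have hd : fderiv ℝ f =ᶠ[nhds x] fderiv ℝ g := h.fderiv
  congr 1
  · refine Finset.sum_congr rfl fun i _ => ?_
    have : (fun y => fderiv ℝ f y (EuclideanSpace.single i 1))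
        =ᶠ[nhds x] (fun y => fderiv ℝ g y (EuclideanSpace.single i 1)) :=
      hd.mono fun y hy => by simp only [hy]
    rw [this.fderiv_eq]
  · congr 1
    refine Finset.sum_congr rfl fun i _ => ?_
    have : (fun y : Euc N => (f y / ‖y‖ ^ 2) • y)
        =ᶠ[nhds x] (fun y : Euc N => (g y / ‖y‖ ^ 2) • y) :=
      h.mono fun y hy => by simp only [hy]
    rw [this.fderiv_eq]

-- rpow derivative helpers
lemma pow_helper {u : ℝ} (hu : 0 < u) (m : ℝ) : u ^ m = u * u ^ (m - 1) := by
  conv_lhs => rw [show m = 1 + (m - 1) by ring]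
  rw [Real.rpow_add hu, Real.rpow_one]

lemma rpowdiv_helper {u : ℝ} (hu : 0 < u) (m : ℝ) : u ^ (m - 1) = u ^ m / u := by
  rw [Real.rpow_sub hu, Real.rpow_one]

lemma Lk_power (N : ℕ) (k c d : ℝ) (x : Euc N) (hx : 0 < ‖x‖) :
    Lk N k (fun y : Euc N => c * (‖y‖ ^ 2 : ℝ) ^ (k / 2) + d * (‖y‖ ^ 2 : ℝ) ^ ((2 - (N : ℝ)) / 2))
      x = 0 := by
  set p := k / 2 with hp
  set q := (2 - (N : ℝ)) / 2 with hq
  have hu0 : (0:ℝ) < ‖x‖ ^ 2 := by positivity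
  rw [Lk_radial N k (fun u => c * u ^ p + d * u ^ q)
      (fun u => c * (p * u ^ (p - 1)) + d * (q * u ^ (q - 1)))
      (fun u => c * (p * ((p - 1) * u ^ (p - 1 - 1))) + d * (q * ((q - 1) * u ^ (q - 1 - 1))))
      (fun u => c * u ^ (p - 1) + d * u ^ (q - 1))
      (fun u => c * ((p - 1) * u ^ (p - 1 - 1)) + d * ((q - 1) * u ^ (q - 1 - 1)))
      ?_ ?_ ?_ ?_ x hx]
  · rw [pow_helper hu0 (p - 1), pow_helper hu0 (q - 1), hp, hq]
    ring
  · intro u hu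
    exact ((Real.hasDerivAt_rpow_const (Or.inl hu.ne')).const_mul c).add
      ((Real.hasDerivAt_rpow_const (Or.inl hu.ne')).const_mul d)
  · intro u hu
    exact (((Real.hasDerivAt_rpow_const (p := p - 1) (Or.inl hu.ne')).const_mul p).const_mul c).add
      (((Real.hasDerivAt_rpow_const (p := q - 1) (Or.inl hu.ne')).const_mul q).const_mul d)
  · intro u hu
    simp only [rpowdiv_helper hu p, rpowdiv_helper hu q]
    ring
  · intro u hu
    exact ((Real.hasDerivAt_rpow_const (p := p - 1) (Or.inl hu.ne')).const_mul c).add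
      ((Real.hasDerivAt_rpow_const (p := q - 1) (Or.inl hu.ne')).const_mul d)

lemma Lk_log (N : ℕ) (x : Euc N) (hx : 0 < ‖x‖) :
    Lk N (2 - (N : ℝ)) (fun y : Euc N =>
      (‖y‖ ^ 2 : ℝ) ^ ((2 - (N : ℝ)) / 2) * (Real.log (‖y‖ ^ 2) / 2)) x = 0 := by
  set m := (2 - (N : ℝ)) / 2 with hm
  have hu0 : (0:ℝ) < ‖x‖ ^ 2 := by positivity
  rw [Lk_radial N (2 - (N : ℝ)) (fun u => u ^ m * (Real.log u / 2))
      (fun u => (m * u ^ (m - 1)) * (Real.log u / 2) + u ^ (m - 1) / 2)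
      (fun u => (m * ((m - 1) * u ^ (m - 1 - 1))) * (Real.log u / 2)
        + m * u ^ (m - 1 - 1) / 2 + ((m - 1) * u ^ (m - 1 - 1)) / 2)
      (fun u => u ^ (m - 1) * (Real.log u / 2))
      (fun u => ((m - 1) * u ^ (m - 1 - 1)) * (Real.log u / 2) + u ^ (m - 1 - 1) / 2)
      ?_ ?_ ?_ ?_ x hx]
  · rw [pow_helper hu0 (m - 1)]
    have hN : (N : ℝ) = 2 - 2 * m := by rw [hm]; ring
    rw [hN]
    ring
  · intro u hu
    have h := (Real.hasDerivAt_rpow_const (p := m) (Or.inl hu.ne')).mul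
      ((Real.hasDerivAt_log hu.ne').div_const 2)
    refine h.congr_deriv ?_
    rw [pow_helper hu m]
    field_simp
  · intro u hu
    have h := (((Real.hasDerivAt_rpow_const (p := m - 1) (Or.inl hu.ne')).const_mul m).mul
      ((Real.hasDerivAt_log hu.ne').div_const 2)).add
      ((Real.hasDerivAt_rpow_const (p := m - 1) (Or.inl hu.ne')).div_const 2)
    refine h.congr_deriv ?_
    rw [pow_helper hu (m - 1)]
    field_simp
  · intro u hu
    simp only [rpowdiv_helper hu m]
    ring
  · intro u hu
    have h := ((Real.hasDerivAt_rpow_const (p := m - 1) (Or.inl hu.ne')).mul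
      ((Real.hasDerivAt_log hu.ne').div_const 2))
    refine h.congr_deriv ?_
    rw [pow_helper hu (m - 1)]
    field_simp

/-- The function `𝒟` is nonnegative on `{|x| ≥ 1}`, satisfies `L_k 𝒟 = 0` on `{|x| > 1}`
and vanishes on the unit sphere. -/
theorem Dfun_nonneg_harmonic_and_vanishing (N : ℕ) (hN : 2 ≤ N) (k : ℝ) :
    (∀ x : Euc N, 1 ≤ ‖x‖ → 0 ≤ Dfun N k x) ∧
    (∀ x : Euc N, 1 < ‖x‖ → Lk N k (Dfun N k) x = 0) ∧
    (∀ x : Euc N, ‖x‖ = 1 → Dfun N k x = 0) := by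
  refine ⟨?_, ?_, ?_⟩
  · -- nonnegativity
    intro x hx
    unfold Dfun
    split_ifs with h1 h2
    · refine mul_nonneg (Real.rpow_nonneg (norm_nonneg x) k) ?_
      have := Real.rpow_le_one_of_one_le_of_nonpos hx (by linarith : 2 - (N : ℝ) - k ≤ 0)
      linarith
    · refine mul_nonneg (Real.rpow_nonneg (norm_nonneg x) _) ?_
      have := Real.rpow_le_one_of_one_le_of_nonpos hx (by linarith : k - 2 + (N : ℝ) ≤ 0)
      linarith
    · exact mul_nonneg (Real.rpow_nonneg (norm_nonneg x) _) (Real.log_nonneg hx)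
  · -- harmonicity
    intro x hx
    have hx0 : (0:ℝ) < ‖x‖ := lt_trans one_pos hx
    have hxne : x ≠ 0 := by simpa using hx0.ne'
    have hpow : ∀ y : Euc N, ∀ a : ℝ, (‖y‖ ^ 2 : ℝ) ^ (a / 2) = ‖y‖ ^ a := by
      intro y a
      rw [← Real.rpow_natCast ‖y‖ 2, ← Real.rpow_mul (norm_nonneg y)]
      congr 1
      push_cast
      ring
    rcases lt_trichotomy (2 - (N : ℝ)) k with h1 | h1 | h1
    · have heq : Dfun N k =ᶠ[nhds x] (fun y : Euc N =>
          1 * (‖y‖ ^ 2 : ℝ) ^ (k / 2) + (-1) * (‖y‖ ^ 2 : ℝ) ^ ((2 - (N : ℝ)) / 2)) := by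
        filter_upwards [eventually_ne_nhds hxne] with y hy
        have hy0 : (0:ℝ) < ‖y‖ := norm_pos_iff.mpr hy
        have hmul : ‖y‖ ^ k * ‖y‖ ^ (2 - (N : ℝ) - k) = ‖y‖ ^ (2 - (N : ℝ)) := by
          rw [← Real.rpow_add hy0]; congr 1; ring
        simp only [Dfun, if_pos h1, hpow y]
        rw [mul_sub, mul_one, hmul]; ring
      rw [Lk_congr N k heq]
      exact Lk_power N k 1 (-1) x hx0
    · -- k = 2 - N
      subst h1
      have heq : Dfun N (2 - (N : ℝ)) =ᶠ[nhds x] (fun y : Euc N =>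
          (‖y‖ ^ 2 : ℝ) ^ ((2 - (N : ℝ)) / 2) * (Real.log (‖y‖ ^ 2) / 2)) := by
        filter_upwards [] with y
        have hlog : Real.log (‖y‖ ^ 2) = 2 * Real.log ‖y‖ := by
          rw [Real.log_pow]; push_cast; ring
        simp only [Dfun, if_neg (lt_irrefl (2 - (N : ℝ))), hpow y, hlog]
        ring
      rw [Lk_congr N (2 - (N : ℝ)) heq]
      exact Lk_log N x hx0
    · have heq : Dfun N k =ᶠ[nhds x] (fun y : Euc N =>
          (-1) * (‖y‖ ^ 2 : ℝ) ^ (k / 2) + 1 * (‖y‖ ^ 2 : ℝ) ^ ((2 - (N : ℝ)) / 2)) := by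
        filter_upwards [eventually_ne_nhds hxne] with y hy
        have hy0 : (0:ℝ) < ‖y‖ := norm_pos_iff.mpr hy
        have hmul : ‖y‖ ^ (2 - (N : ℝ)) * ‖y‖ ^ (k - 2 + (N : ℝ)) = ‖y‖ ^ k := by
          rw [← Real.rpow_add hy0]; congr 1; ring
        simp only [Dfun, if_neg (not_lt.mpr h1.le), if_pos h1, hpow y]
        rw [mul_sub, mul_one, hmul]; ring
      rw [Lk_congr N k heq]
      exact Lk_power N k (-1) 1 x hx0
  · -- vanishing on the sphere
    intro x hx
    unfold Dfun
    split_ifs <;> simp [hx]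
end
end

section
/- Let N ≥ 2, k ∈ ℝ, α ≥ −1, σ ∈ ℝ, p > 1. Let ζ ∈ C_c^∞(ℝ) with ζ ≥ 0, ζ ≢ 0, supp(ζ) ⊂ (0,1), and for T > 0, ℓ > 0 set ι(t) = ζ(t/T)^ℓ. Let {ξ_R} be a family of smooth cutoffs with 0 ≤ ξ_R ≤ 1, ξ_R ≡ 1 on B_R, supp(ξ_R) ⊂ B_{2R}, and let {η_R} be a family of smooth cutoffs with 0 ≤ η_R ≤ 1, η_R ≡ 1 on B_{√R}, supp(η_R) ⊂ B_R. Define 𝒩(x) = |x|^k and φ(t,x) = ι(t) 𝒩(x) ξ_R(x)^ℓ, φ*(t,x) = ι(t) 𝒩(x) η_R(x)^ℓ on Ω. Then for each μ ∈ {φ, φ*}, for all sufficiently large ℓ there exists a constant C > 0 independent of T and R such that for all sufficiently large T and R, I₁(μ) ≤ C T^{1 − (α+p)/(p−1)} (ln R + R^{N + k − σ/(p−1)}). -/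
open MeasureTheory Metric Set Function

noncomputable section

/-- The exterior domain `B₁ᶜ`. -/
def extDom (N : ℕ) : Set (Euc N) := (ball (0 : Euc N) 1)ᶜ

/-- `Ω = (0,∞) × B₁ᶜ`. -/
def OmegaSet (N : ℕ) : Set (ℝ × Euc N) := Ioi (0 : ℝ) ×ˢ extDom N

/-- Time derivative `∂_t μ`. -/
def dtD {N : ℕ} (μ : ℝ × Euc N → ℝ) (z : ℝ × Euc N) : ℝ :=
  deriv (fun s => μ (s, z.2)) z.1

open scoped ENNReal

/-- `I₁(μ) = ∫_Ω t^{−α/(p−1)} |x|^{−σ/(p−1)} μ^{−1/(p−1)} |∂_t μ|^{p/(p−1)} dx dt`,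
as a lower integral (the integrand vanishes wherever `μ = 0`, by the convention
`0 ^ r = 0` for `r ≠ 0`). -/
def I1 (N : ℕ) (α σ p : ℝ) (μ : ℝ × Euc N → ℝ) : ℝ≥0∞ :=
  ∫⁻ z in OmegaSet N, ENNReal.ofReal
    (z.1 ^ (-α / (p - 1)) * ‖z.2‖ ^ (-σ / (p - 1)) * μ z ^ (-1 / (p - 1))
      * |dtD μ z| ^ (p / (p - 1)))

/-- `I₂(μ) = ∫_Ω t^{−α/(p−1)} |x|^{−σ/(p−1)} μ^{−1/(p−1)} |L_k μ|^{p/(p−1)} dx dt`,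
as a lower integral (the integrand vanishes wherever `μ = 0`). -/
def I2 (N : ℕ) (k α σ p : ℝ) (μ : ℝ × Euc N → ℝ) : ℝ≥0∞ :=
  ∫⁻ z in OmegaSet N, ENNReal.ofReal
    (z.1 ^ (-α / (p - 1)) * ‖z.2‖ ^ (-σ / (p - 1)) * μ z ^ (-1 / (p - 1))
      * |Lk N k (fun y => μ (z.1, y)) z.2| ^ (p / (p - 1)))

/-- `ι(t) = ζ(t/T)^ℓ`. -/
def iota (ζ : ℝ → ℝ) (T ℓ t : ℝ) : ℝ := ζ (t / T) ^ ℓ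

/-- `𝒩(x) = |x|^k`. -/
def Nfun (N : ℕ) (k : ℝ) (x : Euc N) : ℝ := ‖x‖ ^ k

/-- `ζ ∈ C_c^∞(ℝ)`, `ζ ≥ 0`, `ζ ≢ 0`, `supp ζ ⊆ (0,1)`. -/
structure IsZeta (ζ : ℝ → ℝ) : Prop where
  smooth : ContDiff ℝ (⊤ : ℕ∞) ζ
  nonneg : ∀ s, 0 ≤ ζ s
  ne_zero : ζ ≠ 0
  supp : tsupport ζ ⊆ Ioo (0 : ℝ) 1

/-- A family of smooth cutoffs `ξ_R` with `0 ≤ ξ_R ≤ 1`, `ξ_R ≡ 1` on `B_R` and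
`supp ξ_R ⊆ B_{2R}`. -/
structure IsXiFamily (N : ℕ) (ξ : ℝ → Euc N → ℝ) : Prop where
  smooth : ∀ R : ℝ, ContDiff ℝ (⊤ : ℕ∞) (ξ R)
  mem_Icc : ∀ (R : ℝ) (x : Euc N), ξ R x ∈ Icc (0 : ℝ) 1
  eq_one : ∀ R : ℝ, 1 < R → ∀ x ∈ ball (0 : Euc N) R, ξ R x = 1
  supp : ∀ R : ℝ, 1 < R → Function.support (ξ R) ⊆ ball (0 : Euc N) (2 * R)

/-- A `ξ`-family with in addition `|∇ξ_R| ≤ C₀ R⁻¹` and `|Δξ_R| ≤ C₀ R⁻²`. -/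
structure IsXiFamilyBnd (N : ℕ) (ξ : ℝ → Euc N → ℝ) (C₀ : ℝ)
    extends IsXiFamily N ξ : Prop where
  grad_bound : ∀ R : ℝ, 1 < R → ∀ x : Euc N, ‖gradient (ξ R) x‖ ≤ C₀ / R
  lapl_bound : ∀ R : ℝ, 1 < R → ∀ x : Euc N, |lapl N (ξ R) x| ≤ C₀ / R ^ 2

/-- A family of smooth cutoffs `η_R` with `0 ≤ η_R ≤ 1`, `η_R ≡ 1` on `B_√R` and
`supp η_R ⊆ B_R`. -/
structure IsEtaFamily (N : ℕ) (η : ℝ → Euc N → ℝ) : Prop where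
  smooth : ∀ R : ℝ, ContDiff ℝ (⊤ : ℕ∞) (η R)
  mem_Icc : ∀ (R : ℝ) (x : Euc N), η R x ∈ Icc (0 : ℝ) 1
  eq_one : ∀ R : ℝ, 1 < R → ∀ x ∈ ball (0 : Euc N) (Real.sqrt R), η R x = 1
  supp : ∀ R : ℝ, 1 < R → Function.support (η R) ⊆ ball (0 : Euc N) R

/-- An `η`-family with in addition `|∇η_R(x)| ≤ C₀/(|x| ln R)` and
`|Δη_R(x)| ≤ C₀/(|x|² ln R)` on the annulus `√R < |x| < R`. -/
structure IsEtaFamilyBnd (N : ℕ) (η : ℝ → Euc N → ℝ) (C₀ : ℝ)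
    extends IsEtaFamily N η : Prop where
  grad_bound : ∀ R : ℝ, 1 < R → ∀ x : Euc N, Real.sqrt R < ‖x‖ → ‖x‖ < R →
    ‖gradient (η R) x‖ ≤ C₀ / (‖x‖ * Real.log R)
  lapl_bound : ∀ R : ℝ, 1 < R → ∀ x : Euc N, Real.sqrt R < ‖x‖ → ‖x‖ < R →
    |lapl N (η R) x| ≤ C₀ / (‖x‖ ^ 2 * Real.log R)
section Spatial

lemma log_ge_one_of_three_le {R : ℝ} (hR : 3 ≤ R) : 1 ≤ Real.log R := by
  have hR0 : 0 < R := by linarith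
  rw [Real.le_log_iff_exp_le hR0]
  calc Real.exp 1 ≤ 2.7182818286 := Real.exp_one_lt_d9.le
    _ ≤ R := by linarith

lemma interval_rpow_bound (m : ℝ) :
    ∃ cm : ℝ, 0 < cm ∧ ∀ R : ℝ, 3 ≤ R →
      ∫ y in (1:ℝ)..(2*R), y ^ (m - 1) ≤ cm * (Real.log R + R ^ m) := by
  rcases lt_trichotomy m 0 with hm | hm | hm
  · refine ⟨1 / (-m), one_div_pos.2 (by linarith), fun R hR => ?_⟩
    have hR0 : (0:ℝ) < R := by linarith
    have h2R : (1:ℝ) ≤ 2 * R := by linarith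
    have h0 : (0:ℝ) ∉ Set.uIcc (1:ℝ) (2*R) := by
      rw [Set.uIcc_of_le h2R]; rintro ⟨h1, -⟩; norm_num at h1
    rw [integral_rpow (Or.inr ⟨by intro h; simp only [sub_eq_iff_eq_add] at h; rw [h] at hm; norm_num at hm, h0⟩)]
    have hm1 : m - 1 + 1 = m := by ring
    rw [hm1, Real.one_rpow]
    have h2Rm : (2*R) ^ m ≤ 1 := Real.rpow_le_one_of_one_le_of_nonpos h2R hm.le
    have h2Rm0 : (0:ℝ) < (2*R) ^ m := Real.rpow_pos_of_pos (by linarith) m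
    have hRm0 : (0:ℝ) < R ^ m := Real.rpow_pos_of_pos hR0 m
    have hlog : 1 ≤ Real.log R := log_ge_one_of_three_le hR
    rw [div_le_iff_of_neg hm]
    have key : 1 / (-m) * (Real.log R + R ^ m) * m = -(Real.log R + R ^ m) := by
      have hne : -m ≠ 0 := by intro h; rw [neg_eq_zero] at h; rw [h] at hm; norm_num at hm
      have hmm : 1 / (-m) * m = -1 := by rw [one_div, inv_neg, neg_mul, inv_mul_cancel₀ hm.ne]
      rw [mul_right_comm, hmm, neg_one_mul]
    rw [key]; linarith
  · refine ⟨2, by norm_num, fun R hR => ?_⟩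
    have hR0 : (0:ℝ) < R := by linarith
    have h2R : (1:ℝ) ≤ 2 * R := by linarith
    have h0 : (0:ℝ) ∉ Set.uIcc (1:ℝ) (2*R) := by
      rw [Set.uIcc_of_le h2R]; rintro ⟨h1, -⟩; norm_num at h1
    have hcongr : ∫ y in (1:ℝ)..(2*R), y ^ (m - 1) = ∫ y in (1:ℝ)..(2*R), y⁻¹ := by
      apply intervalIntegral.integral_congr
      intro y hy
      show y ^ (m - 1) = y⁻¹
      rw [hm, show (0:ℝ) - 1 = ((-1 : ℤ) : ℝ) by norm_num, Real.rpow_intCast, zpow_neg_one]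
    rw [hcongr, integral_inv h0, div_one, hm]
    have hlog : 1 ≤ Real.log R := log_ge_one_of_three_le hR
    have hlog2 : Real.log (2*R) = Real.log 2 + Real.log R :=
      Real.log_mul two_ne_zero hR0.ne'
    have h2 : Real.log 2 ≤ 1 := by
      calc Real.log 2 ≤ 0.6931471808 := Real.log_two_lt_d9.le
        _ ≤ 1 := by norm_num
    rw [hlog2, Real.rpow_zero]
    linarith
  · refine ⟨2 ^ m / m + 1, by positivity, fun R hR => ?_⟩
    have hR0 : (0:ℝ) < R := by linarith
    have h2R : (1:ℝ) ≤ 2 * R := by linarith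
    have h0 : (0:ℝ) ∉ Set.uIcc (1:ℝ) (2*R) := by
      rw [Set.uIcc_of_le h2R]; rintro ⟨h1, -⟩; norm_num at h1
    rw [integral_rpow (Or.inr ⟨by intro h; simp only [sub_eq_iff_eq_add] at h; rw [h] at hm; norm_num at hm, h0⟩)]
    have hm1 : m - 1 + 1 = m := by ring
    rw [hm1, Real.one_rpow]
    have hRm0 : (0:ℝ) < R ^ m := Real.rpow_pos_of_pos hR0 m
    have hlog : 1 ≤ Real.log R := log_ge_one_of_three_le hR
    have hmul : (2*R) ^ m = 2 ^ m * R ^ m := Real.mul_rpow (by norm_num) hR0.le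
    have h2m : (0:ℝ) < 2 ^ m := Real.rpow_pos_of_pos two_pos m
    rw [hmul, div_le_iff₀ hm]
    have h1 : (2 ^ m / m + 1) * (Real.log R + R ^ m) * m
        = 2 ^ m * (Real.log R + R ^ m) + m * (Real.log R + R ^ m) := by
      field_simp
    rw [h1]
    nlinarith [mul_nonneg h2m.le (show (0:ℝ) ≤ Real.log R by linarith),
      mul_pos hm (show (0:ℝ) < Real.log R + R ^ m by linarith)]

end Spatial
section Spatial2

lemma spatial_bound (N : ℕ) (hN : 2 ≤ N) (e : ℝ) :
    ∃ B : ℝ, 0 < B ∧ ∀ R : ℝ, 3 ≤ R →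
      (∫⁻ x in extDom N, (ball (0 : Euc N) (2*R) \ ball 0 1).indicator
          (fun x => ENNReal.ofReal (‖x‖ ^ e)) x)
        ≤ ENNReal.ofReal (B * (Real.log R + R ^ ((N:ℝ) + e))) := by
  obtain ⟨cm, hcm, hcmR⟩ := interval_rpow_bound ((N:ℝ) + e)
  haveI : Nontrivial (Euc N) :=
    Module.nontrivial_of_finrank_pos (R := ℝ) (by rw [finrank_euclideanSpace_fin]; omega)
  set v := (volume (ball (0:Euc N) 1)).toReal with hvdef
  have hv : 0 < v := ENNReal.toReal_pos (measure_ball_pos volume 0 one_pos).ne'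
    measure_ball_lt_top.ne
  refine ⟨N * v * cm, by positivity, fun R hR => ?_⟩
  have hR0 : (0:ℝ) < R := by linarith
  have h2R : (1:ℝ) ≤ 2 * R := by linarith
  set f : ℝ → ℝ := fun y => (Set.Ico (1:ℝ) (2*R)).indicator (fun y => y ^ e) y with hfdef
  have hfeq : (Set.Ico (1:ℝ) (2*R)).indicator (fun y : ℝ => y ^ e)
      = (Set.Ico (1:ℝ) (2*R)).indicator (fun y => Real.exp (Real.log y * e)) :=
    Set.indicator_congr fun y hy => Real.rpow_def_of_pos (by linarith [hy.1]) e
  have hfmeas : Measurable f := by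
    rw [hfdef, hfeq]
    exact (Real.measurable_exp.comp (Real.measurable_log.mul_const e)).indicator
      measurableSet_Ico
  have hA : MeasurableSet (ball (0:Euc N) (2*R) \ ball 0 1) :=
    measurableSet_ball.diff measurableSet_ball
  -- step 1 : pointwise domination
  have step1 : (∫⁻ x in extDom N, (ball (0 : Euc N) (2*R) \ ball 0 1).indicator
          (fun x => ENNReal.ofReal (‖x‖ ^ e)) x)
      ≤ ∫⁻ x : Euc N, ENNReal.ofReal (f ‖x‖) := by
    refine le_trans (setLIntegral_mono
      (ENNReal.measurable_ofReal.comp (hfmeas.comp measurable_norm)) fun x _ => ?_)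
      (setLIntegral_le_lintegral _ _)
    by_cases hxb : x ∈ ball (0:Euc N) (2*R) \ ball 0 1
    · rw [Set.indicator_of_mem hxb]
      have h1 : ‖x‖ ∈ Set.Ico (1:ℝ) (2*R) := by
        obtain ⟨hb, hnb⟩ := hxb
        rw [mem_ball, dist_zero_right] at hb hnb
        exact ⟨not_lt.1 hnb, hb⟩
      simp only [Function.comp_apply, hfdef]
      rw [Set.indicator_of_mem h1]
    · rw [Set.indicator_of_notMem hxb]
      exact zero_le
  -- identification of x ↦ f ‖x‖ as an indicator
  have hgind : (fun x : Euc N => f ‖x‖)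
      = (ball (0:Euc N) (2*R) \ ball 0 1).indicator (fun x => ‖x‖ ^ e) := by
    funext x
    by_cases hxb : x ∈ ball (0:Euc N) (2*R) \ ball 0 1
    · have h1 : ‖x‖ ∈ Set.Ico (1:ℝ) (2*R) := by
        obtain ⟨hb, hnb⟩ := hxb
        rw [mem_ball, dist_zero_right] at hb hnb
        exact ⟨not_lt.1 hnb, hb⟩
      simp only [hfdef]
      rw [Set.indicator_of_mem h1, Set.indicator_of_mem hxb]
    · have h1 : ‖x‖ ∉ Set.Ico (1:ℝ) (2*R) := by
        intro h
        exact hxb ⟨by rw [mem_ball, dist_zero_right]; exact h.2,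
          by rw [mem_ball, dist_zero_right]; exact not_lt.2 h.1⟩
      simp only [hfdef]
      rw [Set.indicator_of_notMem h1, Set.indicator_of_notMem hxb]
  -- integrability
  have hInt : MeasureTheory.Integrable (fun x : Euc N => f ‖x‖) := by
    rw [hgind, integrable_indicator_iff hA]
    apply MeasureTheory.Measure.integrableOn_of_bounded
      (M := max 1 ((2*R) ^ e))
    · exact ((measure_mono Set.diff_subset).trans_lt measure_ball_lt_top).ne
    · have h0 : ∀ᵐ x : Euc N ∂volume, x ≠ 0 :=
        MeasureTheory.ae_iff.2 (by simpa using measure_singleton (0 : Euc N))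
      refine ((Real.measurable_exp.comp
        ((Real.measurable_log.comp measurable_norm).mul_const e)).aestronglyMeasurable).congr ?_
      filter_upwards [h0] with x hx
      have h1 : (0:ℝ) < ‖x‖ := norm_pos_iff.2 hx
      exact (Real.rpow_def_of_pos h1 e).symm
    · filter_upwards [MeasureTheory.ae_restrict_mem hA] with x hx
      obtain ⟨hb, hnb⟩ := hx
      rw [mem_ball, dist_zero_right] at hb hnb
      have h1 : (1:ℝ) ≤ ‖x‖ := not_lt.1 hnb
      rw [Real.norm_eq_abs, abs_of_nonneg (Real.rpow_nonneg (norm_nonneg x) e)]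
      rcases le_or_gt 0 e with he | he
      · exact le_max_of_le_right (Real.rpow_le_rpow (norm_nonneg x) hb.le he)
      · exact le_max_of_le_left (Real.rpow_le_one_of_one_le_of_nonpos h1 he.le)
  have hnn : 0 ≤ᵐ[volume] fun x : Euc N => f ‖x‖ :=
    Filter.Eventually.of_forall fun x =>
      Set.indicator_nonneg (fun y hy => Real.rpow_nonneg (by linarith [hy.1]) e) _
  have step2 : (∫⁻ x : Euc N, ENNReal.ofReal (f ‖x‖))
      = ENNReal.ofReal (∫ x : Euc N, f ‖x‖) :=
    (MeasureTheory.ofReal_integral_eq_lintegral_ofReal hInt hnn).symm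
  -- polar coordinates
  have step3 := MeasureTheory.integral_fun_norm_addHaar (volume : Measure (Euc N)) f
  rw [finrank_euclideanSpace_fin] at step3
  -- compute the radial integral
  have step4 : (∫ y in Set.Ioi (0:ℝ), y ^ (N - 1) • f y)
      = ∫ y in (1:ℝ)..(2*R), y ^ ((N:ℝ) + e - 1) := by
    have e1 : (fun y : ℝ => y ^ (N - 1) • f y)
        = fun y => (Set.Ico (1:ℝ) (2*R)).indicator (fun y => y ^ (N-1) * y ^ e) y := by
      funext y
      by_cases hy : y ∈ Set.Ico (1:ℝ) (2*R)
      · simp only [hfdef, smul_eq_mul]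
        rw [Set.indicator_of_mem hy, Set.indicator_of_mem hy]
      · simp only [hfdef, smul_eq_mul]
        rw [Set.indicator_of_notMem hy, Set.indicator_of_notMem hy, mul_zero]
    rw [e1, MeasureTheory.setIntegral_indicator measurableSet_Ico]
    have e2 : Set.Ioi (0:ℝ) ∩ Set.Ico (1:ℝ) (2*R) = Set.Ico (1:ℝ) (2*R) :=
      Set.inter_eq_right.2 fun y hy => lt_of_lt_of_le one_pos hy.1
    rw [e2, MeasureTheory.integral_Ico_eq_integral_Ioo,
      ← MeasureTheory.integral_Ioc_eq_integral_Ioo, ← intervalIntegral.integral_of_le h2R]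
    apply intervalIntegral.integral_congr
    intro y hy
    rw [Set.uIcc_of_le h2R] at hy
    have hy1 : (1:ℝ) ≤ y := hy.1
    have hy0 : (0:ℝ) < y := by linarith
    show y ^ (N - 1) * y ^ e = _
    rw [← Real.rpow_natCast y (N - 1), ← Real.rpow_add hy0]
    congr 1
    rw [Nat.cast_sub (by omega : 1 ≤ N)]
    push_cast; ring
  calc (∫⁻ x in extDom N, (ball (0 : Euc N) (2*R) \ ball 0 1).indicator
          (fun x => ENNReal.ofReal (‖x‖ ^ e)) x)
      ≤ ∫⁻ x : Euc N, ENNReal.ofReal (f ‖x‖) := step1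
    _ = ENNReal.ofReal (∫ x : Euc N, f ‖x‖) := step2
    _ ≤ ENNReal.ofReal (N * v * cm * (Real.log R + R ^ ((N:ℝ) + e))) := by
        apply ENNReal.ofReal_le_ofReal
        rw [step3, step4]
        have hI := hcmR R hR
        rw [nsmul_eq_mul, smul_eq_mul]
        calc (N:ℝ) * (v * ∫ y in (1:ℝ)..(2*R), y ^ ((N:ℝ) + e - 1))
            ≤ N * (v * (cm * (Real.log R + R ^ ((N:ℝ) + e)))) := by
              apply mul_le_mul_of_nonneg_left _ (Nat.cast_nonneg N)
              exact mul_le_mul_of_nonneg_left hI hv.le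
          _ = N * v * cm * (Real.log R + R ^ ((N:ℝ) + e)) := by ring

end Spatial2
section KeyAux

lemma zeta_inf {ζ : ℝ → ℝ} (hζ : IsZeta ζ) :
    ∃ a : ℝ, 0 < a ∧ a < 1 ∧ ∀ s : ℝ, ζ s ≠ 0 → a ≤ s ∧ s < 1 := by
  have hK : IsCompact (tsupport ζ) := by
    apply Metric.isCompact_of_isClosed_isBounded (isClosed_tsupport ζ)
    exact (Metric.isBounded_Icc (0:ℝ) 1).subset (hζ.supp.trans Set.Ioo_subset_Icc_self)
  have hne : (tsupport ζ).Nonempty := by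
    by_contra h
    rw [Set.not_nonempty_iff_eq_empty] at h
    exact hζ.ne_zero (by rwa [tsupport_eq_empty_iff] at h)
  have hmem := hK.sInf_mem hne
  refine ⟨sInf (tsupport ζ), (hζ.supp hmem).1, (hζ.supp hmem).2, fun s hs => ?_⟩
  have hsK : s ∈ tsupport ζ := subset_tsupport ζ hs
  exact ⟨csInf_le hK.bddBelow hsK, (hζ.supp hsK).2⟩

lemma zeta_bounds {ζ : ℝ → ℝ} (hζ : IsZeta ζ) :
    ∃ M₁ M₂ : ℝ, 1 ≤ M₁ ∧ 1 ≤ M₂ ∧ (∀ s, ζ s ≤ M₁) ∧ (∀ s, |deriv ζ s| ≤ M₂) := by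
  have hK : IsCompact (tsupport ζ) := by
    apply Metric.isCompact_of_isClosed_isBounded (isClosed_tsupport ζ)
    exact (Metric.isBounded_Icc (0:ℝ) 1).subset (hζ.supp.trans Set.Ioo_subset_Icc_self)
  obtain ⟨C₁, hC₁⟩ := hK.exists_bound_of_continuousOn
    (hζ.smooth.continuous.continuousOn)
  obtain ⟨C₂, hC₂⟩ := hK.exists_bound_of_continuousOn
    ((hζ.smooth.continuous_deriv (by exact_mod_cast le_top)).continuousOn)
  refine ⟨max C₁ 1, max C₂ 1, le_max_right _ _, le_max_right _ _, fun s => ?_, fun s => ?_⟩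
  · by_cases hs : s ∈ tsupport ζ
    · exact le_trans (le_abs_self _) (le_trans (hC₁ s hs) (le_max_left _ _))
    · rw [image_eq_zero_of_notMem_tsupport hs]
      exact le_trans zero_le_one (le_max_right _ _)
  · by_cases hs : s ∈ tsupport ζ
    · exact le_trans (hC₂ s hs) (le_max_left _ _)
    · have : deriv ζ s = 0 := by
        by_contra h
        exact hs (support_deriv_subset (by exact h))
      rw [this, abs_zero]
      exact le_trans zero_le_one (le_max_right _ _)

end KeyAux
section KeyMain
set_option maxHeartbeats 1000000

lemma key_estimate (N : ℕ) (hN : 2 ≤ N) (k α σ p : ℝ) (hp : 1 < p)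
    (ζ : ℝ → ℝ) (hζ : IsZeta ζ) (ℓ : ℝ) (hℓ : p / (p - 1) ≤ ℓ) :
    ∃ C : ℝ, 0 < C ∧ ∀ T : ℝ, 1 ≤ T → ∀ R : ℝ, 3 ≤ R → ∀ χ : Euc N → ℝ,
      (∀ x, χ x ∈ Icc (0:ℝ) 1) → Function.support χ ⊆ ball (0 : Euc N) (2 * R) →
      I1 N α σ p (fun z => iota ζ T ℓ z.1 * (Nfun N k z.2 * χ z.2 ^ ℓ))
        ≤ ENNReal.ofReal (C * T ^ (1 - (α + p) / (p - 1))
            * (Real.log R + R ^ ((N : ℝ) + k - σ / (p - 1)))) := by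
  have hp1 : (0:ℝ) < p - 1 := by linarith
  set q : ℝ := p / (p - 1) with hqdef
  have hq1 : 1 < q := (one_lt_div hp1).2 (by linarith)
  have hℓ0 : (0:ℝ) < ℓ := by linarith
  have hℓq : q ≤ ℓ := hℓ
  have hℓne : ℓ ≠ 0 := hℓ0.ne'
  obtain ⟨a, ha0, ha1, haS⟩ := zeta_inf hζ
  obtain ⟨M₁, M₂, hM₁1, hM₂1, hM₁, hM₂⟩ := zeta_bounds hζ
  obtain ⟨B, hB0, hBR⟩ := spatial_bound N hN (k - σ / (p - 1))
  set D : ℝ := ℓ ^ q * M₁ ^ (ℓ - q) * M₂ ^ q with hDdef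
  have hD0 : 0 < D :=
    mul_pos (mul_pos (Real.rpow_pos_of_pos hℓ0 q)
      (Real.rpow_pos_of_pos (by linarith) (ℓ - q))) (Real.rpow_pos_of_pos (by linarith) q)
  set ca : ℝ := max 1 (a ^ (-α / (p - 1))) with hcadef
  have hca1 : 1 ≤ ca := le_max_left _ _
  have hca0 : 0 < ca := lt_of_lt_of_le one_pos hca1
  refine ⟨D * ca * B, mul_pos (mul_pos hD0 hca0) hB0, fun T hT R hR χ hχIcc hχsupp => ?_⟩
  have hT0 : (0:ℝ) < T := by linarith
  have hR0 : (0:ℝ) < R := by linarith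
  set e : ℝ := k - σ / (p - 1) with hedef
  set κ : ℝ := D * ca * (T ^ (-q) * T ^ (-α / (p - 1))) with hκdef
  have hκ0 : 0 ≤ κ := by
    have h1 : (0:ℝ) ≤ T ^ (-q) := (Real.rpow_pos_of_pos hT0 _).le
    have h2 : (0:ℝ) ≤ T ^ (-α / (p - 1)) := (Real.rpow_pos_of_pos hT0 _).le
    rw [hκdef]; positivity
  set F : ℝ → ℝ≥0∞ := fun t => (Set.Icc (a*T) T).indicator
    (fun _ => ENNReal.ofReal κ) t with hFdef
  set G : Euc N → ℝ≥0∞ := fun x => (ball (0:Euc N) (2*R) \ ball 0 1).indicator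
    (fun x => ENNReal.ofReal (‖x‖ ^ e)) x with hGdef
  have hFmeas : Measurable F := Measurable.indicator measurable_const measurableSet_Icc
  have hGmeas : Measurable G := by
    have hGalt : G = (ball (0:Euc N) (2*R) \ ball 0 1).indicator
        (fun x => ENNReal.ofReal (Real.exp (Real.log ‖x‖ * e))) := by
      rw [hGdef]
      apply Set.indicator_congr
      intro x hx
      have h1 : (0:ℝ) < ‖x‖ := by
        have := hx.2; rw [mem_ball, dist_zero_right] at this; linarith [not_lt.1 this]
      show ENNReal.ofReal (‖x‖ ^ e) = ENNReal.ofReal (Real.exp (Real.log ‖x‖ * e))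
      rw [Real.rpow_def_of_pos h1]
    rw [hGalt]
    exact (ENNReal.measurable_ofReal.comp (Real.measurable_exp.comp
      ((Real.measurable_log.comp measurable_norm).mul_const e))).indicator
      (measurableSet_ball.diff measurableSet_ball)
  -- pointwise bound
  have hpoint : ∀ z ∈ OmegaSet N, ENNReal.ofReal
      (z.1 ^ (-α / (p - 1)) * ‖z.2‖ ^ (-σ / (p - 1))
        * ((fun z : ℝ × Euc N => iota ζ T ℓ z.1 * (Nfun N k z.2 * χ z.2 ^ ℓ)) z) ^ (-1 / (p - 1))
        * |dtD (fun z : ℝ × Euc N => iota ζ T ℓ z.1 * (Nfun N k z.2 * χ z.2 ^ ℓ)) z| ^ (p / (p - 1)))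
      ≤ F z.1 * G z.2 := by
    rintro ⟨t, x⟩ hz
    obtain ⟨ht, hx⟩ := hz
    simp only [Set.mem_Ioi] at ht
    have hx1 : (1:ℝ) ≤ ‖x‖ := by
      have hh : x ∉ ball (0:Euc N) 1 := hx
      rwa [mem_ball, dist_zero_right, not_lt] at hh
    have hn0 : (0:ℝ) < ‖x‖ := by linarith
    dsimp only
    by_cases hμ0 : iota ζ T ℓ t * (Nfun N k x * χ x ^ ℓ) = 0
    · rw [hμ0, Real.zero_rpow (by
        intro h; rw [div_eq_zero_iff] at h
        rcases h with h | h
        · norm_num at h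
        · linarith), mul_zero, zero_mul]
      simp
    · set c := ζ (t/T) with hcdef
      set w := Nfun N k x * χ x ^ ℓ with hwdef
      have hχ0 : (0:ℝ) ≤ χ x := (hχIcc x).1
      have hχ1 : χ x ≤ 1 := (hχIcc x).2
      have hcn : c ≠ 0 := by
        intro h
        apply hμ0
        rw [show iota ζ T ℓ t = c ^ ℓ from rfl, h, Real.zero_rpow hℓne, zero_mul]
      have hc : 0 < c := (hζ.nonneg _).lt_of_ne' hcn
      have hwn : w ≠ 0 := by
        intro h; apply hμ0; rw [h, mul_zero]
      have hwnn : (0:ℝ) ≤ w :=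
        mul_nonneg (Real.rpow_nonneg (norm_nonneg x) k) (Real.rpow_nonneg hχ0 ℓ)
      have hw : 0 < w := lt_of_le_of_ne hwnn (Ne.symm hwn)
      have hχne : χ x ≠ 0 := by
        intro h
        apply hwn
        rw [hwdef, Nfun, h, Real.zero_rpow hℓne, mul_zero]
      have htT := haS (t / T) hcn
      have htmem : t ∈ Set.Icc (a * T) T := by
        constructor
        · have h := (le_div_iff₀ hT0).1 htT.1; linarith
        · have h := (div_lt_one hT0).1 htT.2; linarith
      have hxmem : x ∈ ball (0:Euc N) (2*R) \ ball 0 1 := by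
        refine ⟨?_, hx⟩
        exact hχsupp (by exact hχne)
      rw [hFdef, hGdef]
      simp only []
      rw [Set.indicator_of_mem htmem, Set.indicator_of_mem hxmem,
        ← ENNReal.ofReal_mul hκ0]
      -- derivative computation
      have hζd : HasDerivAt ζ (deriv ζ (t/T)) (t/T) :=
        ((hζ.smooth.differentiable (by simp)) (t/T)).hasDerivAt
      have hdiv : HasDerivAt (fun s : ℝ => s / T) (1/T) t := (hasDerivAt_id t).div_const T
      have h1 : HasDerivAt (fun s => ζ (s/T)) (deriv ζ (t/T) * (1/T)) t := hζd.comp t hdiv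
      have h2 : HasDerivAt (fun y : ℝ => y ^ ℓ) (ℓ * c ^ (ℓ - 1)) c :=
        Real.hasDerivAt_rpow_const (Or.inl hcn)
      have h3 : HasDerivAt (fun s => ζ (s/T) ^ ℓ)
          (ℓ * c ^ (ℓ - 1) * (deriv ζ (t/T) * (1/T))) t := by have h := h2.comp t h1; exact h
      have h4 := h3.mul_const w
      have hdtD : dtD (fun z : ℝ × Euc N => iota ζ T ℓ z.1 * (Nfun N k z.2 * χ z.2 ^ ℓ)) (t, x)
          = ℓ * c ^ (ℓ - 1) * (deriv ζ (t/T) * (1/T)) * w := h4.deriv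
      rw [hdtD]
      apply ENNReal.ofReal_le_ofReal
      set dd := |deriv ζ (t/T)| with hdddef
      have hdd0 : 0 ≤ dd := abs_nonneg _
      have habs : |ℓ * c ^ (ℓ - 1) * (deriv ζ (t/T) * (1/T)) * w|
          = ℓ * c ^ (ℓ - 1) * (dd * (1/T)) * w := by
        rw [abs_mul, abs_mul, abs_mul, abs_mul, abs_of_nonneg hℓ0.le,
          abs_of_nonneg (Real.rpow_nonneg hc.le _), abs_of_nonneg hwnn,
          abs_of_nonneg (by positivity : (0:ℝ) ≤ 1/T), ← hdddef]
      rw [show iota ζ T ℓ t = c ^ ℓ from rfl, habs]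
      have hExp1 : ℓ * (-1/(p-1)) + (ℓ-1)*q = ℓ - q := by
        rw [hqdef]; field_simp; ring
      have hExp2 : -1/(p-1) + q = 1 := by
        rw [hqdef]; field_simp; ring
      have e1 : (c ^ ℓ * w) ^ (-1/(p-1)) = c ^ (ℓ * (-1/(p-1))) * w ^ (-1/(p-1)) := by
        rw [Real.mul_rpow (Real.rpow_nonneg hc.le ℓ) hw.le, ← Real.rpow_mul hc.le]
      have e2 : (ℓ * c ^ (ℓ-1) * (dd * (1/T)) * w) ^ q
          = ℓ ^ q * c ^ ((ℓ-1)*q) * (dd * (1/T)) ^ q * w ^ q := by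
        rw [Real.mul_rpow (mul_nonneg (mul_nonneg hℓ0.le (Real.rpow_nonneg hc.le _))
            (mul_nonneg hdd0 (by positivity))) hw.le,
          Real.mul_rpow (mul_nonneg hℓ0.le (Real.rpow_nonneg hc.le _))
            (mul_nonneg hdd0 (by positivity)),
          Real.mul_rpow hℓ0.le (Real.rpow_nonneg hc.le _),
          ← Real.rpow_mul hc.le]
      have hsplit : (dd * (1/T)) ^ q = dd ^ q * (1/T) ^ q :=
        Real.mul_rpow hdd0 (by positivity)
      have hwsplit : w = ‖x‖ ^ k * χ x ^ ℓ := rfl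
      calc t ^ (-α / (p - 1)) * ‖x‖ ^ (-σ / (p - 1)) * (c ^ ℓ * w) ^ (-1 / (p - 1))
            * (ℓ * c ^ (ℓ-1) * (dd * (1/T)) * w) ^ q
          = t ^ (-α / (p - 1)) * ‖x‖ ^ (-σ / (p - 1))
            * (c ^ (ℓ * (-1/(p-1)) + (ℓ-1)*q) * (w ^ (-1/(p-1) + q)
              * (ℓ ^ q * (dd * (1/T)) ^ q))) := by
            rw [e1, e2, Real.rpow_add hc, Real.rpow_add hw]
            ring
        _ = t ^ (-α / (p - 1)) * (ℓ ^ q * c ^ (ℓ - q) * dd ^ q * (1/T) ^ q)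
            * (‖x‖ ^ (-σ / (p - 1)) * ‖x‖ ^ k * χ x ^ ℓ) := by
            rw [hExp1, hExp2, Real.rpow_one, hsplit, hwsplit]
            ring
        _ ≤ (ca * T ^ (-α / (p - 1))) * (ℓ ^ q * M₁ ^ (ℓ - q) * M₂ ^ q * (1/T) ^ q)
            * (‖x‖ ^ (-σ / (p - 1)) * ‖x‖ ^ k * 1) := by
            have hb1 : t ^ (-α / (p - 1)) ≤ ca * T ^ (-α / (p - 1)) := by
              rcases le_or_gt 0 (-α / (p - 1)) with hβ | hβ
              · calc t ^ (-α / (p - 1)) ≤ T ^ (-α / (p - 1)) :=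
                    Real.rpow_le_rpow (by nlinarith [htmem.1, mul_pos ha0 hT0]) htmem.2 hβ
                  _ ≤ ca * T ^ (-α / (p - 1)) := by
                    nlinarith [Real.rpow_pos_of_pos hT0 (-α / (p - 1))]
              · calc t ^ (-α / (p - 1)) ≤ (a * T) ^ (-α / (p - 1)) :=
                    Real.rpow_le_rpow_of_nonpos (mul_pos ha0 hT0) htmem.1 hβ.le
                  _ = a ^ (-α / (p - 1)) * T ^ (-α / (p - 1)) :=
                    Real.mul_rpow ha0.le hT0.le
                  _ ≤ ca * T ^ (-α / (p - 1)) :=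
                    mul_le_mul_of_nonneg_right (le_max_right _ _)
                      (Real.rpow_pos_of_pos hT0 _).le
            have hb2 : c ^ (ℓ - q) ≤ M₁ ^ (ℓ - q) :=
              Real.rpow_le_rpow hc.le (hM₁ _) (by linarith)
            have hb3 : dd ^ q ≤ M₂ ^ q :=
              Real.rpow_le_rpow hdd0 (hM₂ _) (by linarith)
            have hb4 : χ x ^ ℓ ≤ 1 := Real.rpow_le_one hχ0 hχ1 hℓ0.le
            have hq0 : (0:ℝ) ≤ ℓ ^ q := Real.rpow_nonneg hℓ0.le q
            have hP2 : ℓ ^ q * c ^ (ℓ - q) * dd ^ q * (1/T) ^ q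
                ≤ ℓ ^ q * M₁ ^ (ℓ - q) * M₂ ^ q * (1/T) ^ q := by
              apply mul_le_mul_of_nonneg_right _ (Real.rpow_nonneg (by positivity) q)
              apply mul_le_mul (mul_le_mul_of_nonneg_left hb2 hq0) hb3
                (Real.rpow_nonneg hdd0 q)
              exact mul_nonneg hq0 (Real.rpow_nonneg (by linarith) _)
            have hP3 : ‖x‖ ^ (-σ / (p - 1)) * ‖x‖ ^ k * χ x ^ ℓ
                ≤ ‖x‖ ^ (-σ / (p - 1)) * ‖x‖ ^ k * 1 := by
              apply mul_le_mul_of_nonneg_left hb4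
              exact mul_nonneg (Real.rpow_nonneg (norm_nonneg x) _)
                (Real.rpow_nonneg (norm_nonneg x) _)
            apply mul_le_mul _ hP3
              (mul_nonneg (mul_nonneg (Real.rpow_nonneg (norm_nonneg x) _)
                (Real.rpow_nonneg (norm_nonneg x) _)) (Real.rpow_nonneg hχ0 _))
              (by
                apply mul_nonneg (mul_nonneg hca0.le (Real.rpow_nonneg hT0.le _))
                apply mul_nonneg (mul_nonneg (mul_nonneg hq0
                  (Real.rpow_nonneg (by linarith) _)) (Real.rpow_nonneg (by linarith) _))
                exact Real.rpow_nonneg (by positivity) _)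
            apply mul_le_mul hb1 hP2
            · exact mul_nonneg (mul_nonneg (mul_nonneg hq0
                (Real.rpow_nonneg hc.le _)) (Real.rpow_nonneg hdd0 _))
                (Real.rpow_nonneg (by positivity) _)
            · exact mul_nonneg hca0.le (Real.rpow_nonneg hT0.le _)
        _ = κ * ‖x‖ ^ e := by
            have hinv : (1/T : ℝ) ^ q = T ^ (-q) := by
              rw [one_div, Real.inv_rpow hT0.le, ← Real.rpow_neg hT0.le]
            have hne2 : ‖x‖ ^ (-σ / (p - 1)) * ‖x‖ ^ k = ‖x‖ ^ e := by
              rw [← Real.rpow_add hn0]; congr 1; rw [hedef]; ring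
            rw [mul_one, hinv, hne2, hκdef, hDdef]; ring
  -- time integral
  have timeInt : (∫⁻ t in Set.Ioi (0:ℝ), F t) ≤ ENNReal.ofReal κ * ENNReal.ofReal T := by
    rw [hFdef]
    rw [MeasureTheory.lintegral_indicator measurableSet_Icc]
    rw [MeasureTheory.setLIntegral_const, MeasureTheory.Measure.restrict_apply measurableSet_Icc]
    calc ENNReal.ofReal κ * volume (Set.Icc (a*T) T ∩ Set.Ioi 0)
        ≤ ENNReal.ofReal κ * volume (Set.Icc (a*T) T) :=
          mul_le_mul_right (measure_mono Set.inter_subset_left) _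
      _ = ENNReal.ofReal κ * ENNReal.ofReal (T - a*T) := by rw [Real.volume_Icc]
      _ ≤ ENNReal.ofReal κ * ENNReal.ofReal T :=
          mul_le_mul_right (ENNReal.ofReal_le_ofReal (by nlinarith)) _
  -- the space integral
  have spaceInt := hBR R hR
  -- assemble
  unfold I1
  calc (∫⁻ z in OmegaSet N, ENNReal.ofReal
        (z.1 ^ (-α / (p - 1)) * ‖z.2‖ ^ (-σ / (p - 1))
          * ((fun z : ℝ × Euc N => iota ζ T ℓ z.1 * (Nfun N k z.2 * χ z.2 ^ ℓ)) z) ^ (-1 / (p - 1))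
          * |dtD (fun z : ℝ × Euc N => iota ζ T ℓ z.1 * (Nfun N k z.2 * χ z.2 ^ ℓ)) z| ^ (p / (p - 1))))
      ≤ ∫⁻ z in OmegaSet N, F z.1 * G z.2 :=
        MeasureTheory.setLIntegral_mono
          ((hFmeas.comp measurable_fst).mul (hGmeas.comp measurable_snd)) hpoint
    _ = (∫⁻ t in Set.Ioi (0:ℝ), F t) * (∫⁻ x in extDom N, G x) := by
        have hvol : (volume : Measure (ℝ × Euc N))
            = (volume : Measure ℝ).prod (volume : Measure (Euc N)) :=
          MeasureTheory.Measure.volume_eq_prod ℝ (Euc N)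
        show ∫⁻ z in Set.Ioi (0:ℝ) ×ˢ extDom N, F z.1 * G z.2 ∂volume = _
        rw [hvol, ← MeasureTheory.Measure.prod_restrict]
        exact MeasureTheory.lintegral_prod_mul hFmeas.aemeasurable hGmeas.aemeasurable
    _ ≤ (ENNReal.ofReal κ * ENNReal.ofReal T)
          * ENNReal.ofReal (B * (Real.log R + R ^ ((N:ℝ) + e))) :=
        mul_le_mul' timeInt spaceInt
    _ ≤ ENNReal.ofReal (D * ca * B * T ^ (1 - (α + p) / (p - 1))
          * (Real.log R + R ^ ((N : ℝ) + k - σ / (p - 1)))) := by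
        rw [← ENNReal.ofReal_mul hκ0, ← ENNReal.ofReal_mul (mul_nonneg hκ0 hT0.le)]
        apply ENNReal.ofReal_le_ofReal
        have hTT : T ^ (-q) * T ^ (-α/(p-1)) * T = T ^ (1 - (α+p)/(p-1)) := by
          rw [← Real.rpow_add hT0, ← Real.rpow_add_one hT0.ne']
          congr 1
          rw [hqdef]; field_simp; ring
        have hee : (N:ℝ) + e = (N:ℝ) + k - σ/(p-1) := by rw [hedef]; ring
        apply le_of_eq
        rw [hee, hκdef, ← hTT]
        ring

end KeyMain
/-- **Lemma 2.7**: for `μ = φ` or `μ = φ*`, where `φ(t,x) = ι(t) 𝒩(x) ξ_R(x)^ℓ` and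
`φ*(t,x) = ι(t) 𝒩(x) η_R(x)^ℓ`, for all sufficiently large `ℓ` there is `C > 0`
independent of `T, R` such that, for all sufficiently large `T` and `R`,
`I₁(μ) ≤ C T^{1−(α+p)/(p−1)} (ln R + R^{N+k−σ/(p−1)})`. -/
theorem I1_estimate_neumann_test_functions (N : ℕ) (hN : 2 ≤ N) (k α σ p : ℝ)
    (hα : -1 ≤ α) (hp : 1 < p)
    (ζ : ℝ → ℝ) (hζ : IsZeta ζ)
    (ξ : ℝ → Euc N → ℝ) (hξ : IsXiFamily N ξ)
    (η : ℝ → Euc N → ℝ) (hη : IsEtaFamily N η) :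
    ∃ ℓ₀ : ℝ, ∀ ℓ : ℝ, ℓ₀ ≤ ℓ → ∃ C : ℝ, 0 < C ∧ ∃ T₀ R₀ : ℝ,
      ∀ T : ℝ, T₀ ≤ T → ∀ R : ℝ, R₀ ≤ R →
        I1 N α σ p (fun z => iota ζ T ℓ z.1 * (Nfun N k z.2 * ξ R z.2 ^ ℓ))
          ≤ ENNReal.ofReal (C * T ^ (1 - (α + p) / (p - 1))
              * (Real.log R + R ^ ((N : ℝ) + k - σ / (p - 1)))) ∧
        I1 N α σ p (fun z => iota ζ T ℓ z.1 * (Nfun N k z.2 * η R z.2 ^ ℓ))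
          ≤ ENNReal.ofReal (C * T ^ (1 - (α + p) / (p - 1))
              * (Real.log R + R ^ ((N : ℝ) + k - σ / (p - 1)))) := by
  refine ⟨p / (p - 1), fun ℓ hℓ => ?_⟩
  obtain ⟨C, hC0, hC⟩ := key_estimate N hN k α σ p hp ζ hζ ℓ hℓ
  refine ⟨C, hC0, 1, 3, fun T hT R hR => ?_⟩
  have hR1 : (1:ℝ) < R := by linarith
  constructor
  · exact hC T hT R hR (ξ R) (hξ.mem_Icc R) (hξ.supp R hR1)
  · refine hC T hT R hR (η R) (hη.mem_Icc R) ?_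
    exact (hη.supp R hR1).trans (ball_subset_ball (by linarith))
end
end

section
/- Let N ≥ 2, k ∈ ℝ, α ≥ −1, σ ∈ ℝ, p > 1. Let ζ ∈ C_c^∞(ℝ) with ζ ≥ 0, ζ ≢ 0, supp(ζ) ⊂ (0,1), and for T > 0, ℓ > 0 set ι(t) = ζ(t/T)^ℓ. Let {ξ_R} be a family of smooth cutoffs with 0 ≤ ξ_R ≤ 1, ξ_R ≡ 1 on B_R, supp(ξ_R) ⊂ B_{2R}, and let {η_R} be a family of smooth cutoffs with 0 ≤ η_R ≤ 1, η_R ≡ 1 on B_{√R}, supp(η_R) ⊂ B_R. Define 𝒟(x) = |x|^k (1 − |x|^{2−N−k}) if k > 2 − N, 𝒟(x) = |x|^{2−N} (1 − |x|^{k−2+N}) if k < 2 − N, 𝒟(x) = |x|^{2−N} ln|x| if k = 2 − N, and set ψ(t,x) = ι(t) 𝒟(x) ξ_R(x)^ℓ, ψ*(t,x) = ι(t) 𝒟(x) η_R(x)^ℓ on Ω. Then for each μ ∈ {ψ, ψ*}, for all sufficiently large ℓ there exists a constant C > 0 independent of T and R such that for all sufficiently large T and R, I₁(μ) ≤ C T^{1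 − (α+p)/(p−1)} · A(R), where A(R) = ln R + R^{N + k − σ/(p−1)} if k > 2 − N, A(R) = R^{2 − σ/(p−1)} + ln R if k < 2 − N, and A(R) = (ln R)(R^{2 − σ/(p−1)} + ln R) if k = 2 − N. -/
open MeasureTheory Metric Set Function

noncomputable section

open scoped ENNReal

/-- The weight `A(R)` of Lemma 2.9. -/
def Aweight (N : ℕ) (k σ p R : ℝ) : ℝ :=
  if 2 - (N : ℝ) < k then Real.log R + R ^ ((N : ℝ) + k - σ / (p - 1))
  else if k < 2 - (N : ℝ) then R ^ (2 - σ / (p - 1)) + Real.log R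
  else Real.log R * (R ^ (2 - σ / (p - 1)) + Real.log R)


lemma oneD_bound (β ρ : ℝ) (hρ : 2 ≤ ρ) :
    ∫ y in Ioo (1:ℝ) ρ, y ^ (β - 1) ≤ ((1/|β| + 2) * (1/Real.log 2 + 2)) * (Real.log ρ + ρ ^ β) := by
  have h1ρ : (1:ℝ) ≤ ρ := by linarith
  have h0ρ : (0:ℝ) < ρ := by linarith
  have hlog2 : 0 < Real.log 2 := Real.log_pos (by norm_num)
  have hlogρ : Real.log 2 ≤ Real.log ρ := Real.log_le_log (by norm_num) hρ
  have hlogρ0 : 0 ≤ Real.log ρ := le_trans hlog2.le hlogρ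
  have hρβ : 0 ≤ ρ ^ β := Real.rpow_nonneg h0ρ.le β
  have hC2 : (0:ℝ) ≤ 1/Real.log 2 := by positivity
  have huIcc : (0:ℝ) ∉ uIcc 1 ρ := by
    rw [uIcc_of_le h1ρ]; intro h; exact absurd h.1 (by norm_num)
  have heq : ∫ y in Ioo (1:ℝ) ρ, y ^ (β - 1) = ∫ y in (1:ℝ)..ρ, y ^ (β - 1) := by
    rw [intervalIntegral.integral_of_le h1ρ, integral_Ioc_eq_integral_Ioo]
  rw [heq]
  by_cases hβ : β = 0
  · subst hβ
    have h0 : ∫ y in (1:ℝ)..ρ, y ^ ((0:ℝ) - 1) = Real.log ρ := by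
      rw [show ∫ y in (1:ℝ)..ρ, y ^ ((0:ℝ) - 1) = ∫ y in (1:ℝ)..ρ, y⁻¹ from ?_,
        integral_inv huIcc, div_one]
      apply intervalIntegral.integral_congr
      intro y hy
      rw [uIcc_of_le h1ρ] at hy
      have hy0 : (0:ℝ) ≤ y := le_trans zero_le_one hy.1
      show y ^ ((0:ℝ) - 1) = y⁻¹
      rw [zero_sub, Real.rpow_neg hy0, Real.rpow_one]
    rw [h0, Real.rpow_zero]
    have hC : (1:ℝ) ≤ (1 / |(0:ℝ)| + 2) * (1/Real.log 2 + 2) := by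
      rw [abs_zero]; nlinarith
    nlinarith
  · have hInt : ∫ y in (1:ℝ)..ρ, y ^ (β - 1) = (ρ ^ β - 1) / β := by
      rw [integral_rpow (Or.inr ⟨by simpa using sub_ne_zero_of_ne hβ, huIcc⟩)]
      simp [sub_add_cancel, Real.one_rpow]
    rw [hInt]
    have hβa : (0:ℝ) ≤ 1/|β| := by positivity
    rcases lt_or_gt_of_ne hβ with hneg | hpos
    · have hρβ1 : ρ ^ β ≤ 1 := Real.rpow_le_one_of_one_le_of_nonpos h1ρ hneg.le
      have habs : |β| = -β := abs_of_neg hneg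
      have hnb : (0:ℝ) < -β := by linarith
      have h1 : (ρ ^ β - 1) / β ≤ 1 / |β| := by
        rw [habs, show (ρ ^ β - 1)/β = (1 - ρ ^ β)/(-β) from by ring]
        gcongr
        linarith
      have key : 1/|β| ≤ (1/|β|) * (1/Real.log 2) * Real.log ρ := by
        have e1 : 1/|β| = (1/|β|) * ((1/Real.log 2) * Real.log 2) := by field_simp
        nlinarith [mul_le_mul_of_nonneg_left hlogρ (by positivity : (0:ℝ) ≤ (1/|β|) * (1/Real.log 2))]
      have key2 : (1/|β|) * (1/Real.log 2) * Real.log ρ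
          ≤ ((1/|β| + 2) * (1/Real.log 2 + 2)) * (Real.log ρ + ρ ^ β) := by
        nlinarith [mul_le_mul_of_nonneg_right (by nlinarith : (1/|β|) * (1/Real.log 2) ≤ (1/|β| + 2) * (1/Real.log 2 + 2)) hlogρ0]
      linarith
    · have habs : |β| = β := abs_of_pos hpos
      have h1 : (ρ ^ β - 1) / β ≤ (1/|β|) * ρ ^ β := by
        rw [habs, div_le_iff₀ hpos]
        have e : 1/β * ρ ^ β * β = ρ ^ β := by field_simp
        rw [e]; linarith
      have h2 : (1:ℝ)/|β| ≤ (1/|β| + 2) * (1/Real.log 2 + 2) := by nlinarith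
      calc (ρ ^ β - 1) / β ≤ (1/|β|) * ρ ^ β := h1
        _ ≤ ((1/|β| + 2) * (1/Real.log 2 + 2)) * (Real.log ρ + ρ ^ β) := by nlinarith

lemma radial_bound (N : ℕ) (hN : 2 ≤ N) (γ cR ρ : ℝ) (hcR : 0 ≤ cR) (hρ : 2 ≤ ρ) :
    ∫⁻ x : Euc N, ENNReal.ofReal ((Ico (1:ℝ) ρ).indicator (fun r => cR * r ^ γ) ‖x‖)
      ≤ ENNReal.ofReal (((N : ℝ) * (volume (ball (0:Euc N) 1)).toReal *
          ((1/|(N:ℝ)+γ| + 2) * (1/Real.log 2 + 2))) * (cR * (Real.log ρ + ρ ^ ((N:ℝ)+γ)))) := by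
  haveI : Nontrivial (Euc N) := by
    exact Module.nontrivial_of_finrank_pos (R := ℝ) (by rw [finrank_euclideanSpace_fin]; omega)
  have h1ρ : (1:ℝ) ≤ ρ := by linarith
  have h0ρ : (0:ℝ) < ρ := by linarith
  set w : ℝ → ℝ := (Ico (1:ℝ) ρ).indicator (fun r => cR * r ^ γ) with hw
  have hwnn : ∀ r, 0 ≤ w r := by
    intro r
    apply indicator_nonneg
    intro y hy
    have : (0:ℝ) < y := lt_of_lt_of_le zero_lt_one hy.1
    positivity
  have hwmeas : Measurable w := by
    apply Measurable.indicator _ measurableSet_Ico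
    measurability
  have hwbd : ∀ r, w r ≤ cR * max 1 (ρ ^ γ) := by
    intro r
    rcases em (r ∈ Ico (1:ℝ) ρ) with h | h
    · rw [hw, indicator_of_mem h]
      have h0r : (0:ℝ) < r := lt_of_lt_of_le zero_lt_one h.1
      rcases le_or_gt 0 γ with hγ | hγ
      · have : r ^ γ ≤ ρ ^ γ := Real.rpow_le_rpow h0r.le h.2.le hγ
        exact mul_le_mul_of_nonneg_left (le_trans this (le_max_right _ _)) hcR
      · have : r ^ γ ≤ (1:ℝ) ^ γ := Real.rpow_le_rpow_of_nonpos zero_lt_one h.1 hγ.le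
        rw [Real.one_rpow] at this
        exact mul_le_mul_of_nonneg_left (le_trans this (le_max_left _ _)) hcR
    · rw [hw, indicator_of_notMem h]
      positivity
  have hMnn : 0 ≤ cR * max 1 (ρ ^ γ) := by positivity
  have hint : Integrable (fun x : Euc N => w ‖x‖) := by
    apply Integrable.mono' (g := (closedBall (0:Euc N) ρ).indicator (fun _ => cR * max 1 (ρ ^ γ)))
    · exact (integrableOn_const measure_closedBall_lt_top.ne).integrable_indicator
        measurableSet_closedBall
    · exact (hwmeas.comp measurable_norm).aestronglyMeasurable
    · apply ae_of_all
      intro x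
      rw [Real.norm_eq_abs, abs_of_nonneg (hwnn _)]
      rcases em (x ∈ closedBall (0:Euc N) ρ) with h | h
      · rw [indicator_of_mem h]; exact hwbd _
      · rw [indicator_of_notMem h, hw]
        rw [mem_closedBall, dist_zero_right, not_le] at h
        rw [indicator_of_notMem (by intro hh; exact absurd hh.2 (not_lt.2 h.le))]
  rw [← ofReal_integral_eq_lintegral_ofReal hint (ae_of_all _ fun x => hwnn _)]
  apply ENNReal.ofReal_le_ofReal
  rw [integral_fun_norm_addHaar volume w, finrank_euclideanSpace_fin]
  have hNat : ((N - 1 : ℕ) : ℝ) = (N : ℝ) - 1 := by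
    rw [Nat.cast_sub (by omega)]; norm_num
  have hJ : ∫ y in Ioi (0:ℝ), y ^ (N - 1) • w y = cR * ∫ y in Ioo (1:ℝ) ρ, y ^ ((N:ℝ) + γ - 1) := by
    have e1 : ∀ y : ℝ, y ^ (N - 1) • w y
        = (Ico (1:ℝ) ρ).indicator (fun y => y ^ (N - 1) * (cR * y ^ γ)) y := by
      intro y
      rcases em (y ∈ Ico (1:ℝ) ρ) with h | h
      · rw [indicator_of_mem h, hw, indicator_of_mem h, smul_eq_mul]
      · rw [indicator_of_notMem h, hw, indicator_of_notMem h, smul_eq_mul, mul_zero]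
    rw [integral_congr_ae (ae_of_all _ e1), integral_indicator measurableSet_Ico,
      Measure.restrict_restrict measurableSet_Ico,
      show Ico (1:ℝ) ρ ∩ Ioi (0:ℝ) = Ico 1 ρ from
        inter_eq_left.mpr (fun y (hy : y ∈ Ico (1:ℝ) ρ) => lt_of_lt_of_le zero_lt_one hy.1),
      show (∫ y in Ico (1:ℝ) ρ, y ^ (N - 1) * (cR * y ^ γ))
        = ∫ y in Ico (1:ℝ) ρ, cR * y ^ ((N:ℝ) + γ - 1) from ?_,
      MeasureTheory.integral_const_mul, integral_Ico_eq_integral_Ioo]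
    apply setIntegral_congr_fun measurableSet_Ico
    intro y hy
    have hy0 : (0:ℝ) < y := lt_of_lt_of_le zero_lt_one hy.1
    have : (y : ℝ) ^ (N - 1 : ℕ) = y ^ ((N:ℝ) - 1) := by
      rw [← Real.rpow_natCast y (N-1), hNat]
    show y ^ (N - 1 : ℕ) * (cR * y ^ γ) = cR * y ^ ((N:ℝ) + γ - 1)
    rw [this, show (N:ℝ) + γ - 1 = ((N:ℝ) - 1) + γ from by ring, Real.rpow_add hy0]
    ring
  rw [hJ, nsmul_eq_mul, smul_eq_mul]
  have hvol : (0:ℝ) ≤ (volume (ball (0:Euc N) 1)).toReal := ENNReal.toReal_nonneg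
  have h1d := oneD_bound ((N:ℝ) + γ) ρ hρ
  calc (N:ℝ) * ((volume (ball (0:Euc N) 1)).toReal * (cR * ∫ y in Ioo (1:ℝ) ρ, y ^ ((N:ℝ) + γ - 1)))
      ≤ (N:ℝ) * ((volume (ball (0:Euc N) 1)).toReal * (cR *
          (((1/|(N:ℝ)+γ| + 2) * (1/Real.log 2 + 2)) * (Real.log ρ + ρ ^ ((N:ℝ)+γ))))) := by
        apply mul_le_mul_of_nonneg_left _ (Nat.cast_nonneg N)
        apply mul_le_mul_of_nonneg_left _ hvol
        apply mul_le_mul_of_nonneg_left h1d hcR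
    _ = ((N : ℝ) * (volume (ball (0:Euc N) 1)).toReal *
          ((1/|(N:ℝ)+γ| + 2) * (1/Real.log 2 + 2))) * (cR * (Real.log ρ + ρ ^ ((N:ℝ)+γ))) := by
        ring

lemma meas_rpow_const (γ : ℝ) : Measurable (fun r : ℝ => r ^ γ) := by measurability

lemma tpow_bound {u v T t aa : ℝ} (hu : 0 < u) (hT : 0 < T) (ht : t ∈ Icc (u*T) (v*T)) :
    t ^ aa ≤ (u ^ aa + v ^ aa) * T ^ aa := by
  have huT : 0 < u * T := by positivity
  have ht0 : 0 < t := lt_of_lt_of_le huT ht.1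
  have hv : 0 < v := by
    rcases le_or_gt v 0 with h | h
    · have : v * T ≤ 0 := mul_nonpos_of_nonpos_of_nonneg h hT.le
      linarith [ht.1, ht.2]
    · exact h
  have h1 : 0 ≤ u ^ aa := Real.rpow_nonneg hu.le aa
  have h2 : 0 ≤ v ^ aa := Real.rpow_nonneg hv.le aa
  have h3 : 0 ≤ T ^ aa := Real.rpow_nonneg hT.le aa
  rcases le_or_gt 0 aa with h | h
  · calc t ^ aa ≤ (v*T) ^ aa := Real.rpow_le_rpow ht0.le ht.2 h
      _ = v^aa * T^aa := Real.mul_rpow hv.le hT.le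
      _ ≤ _ := by nlinarith
  · calc t ^ aa ≤ (u*T) ^ aa := Real.rpow_le_rpow_of_nonpos huT ht.1 h.le
      _ = u^aa * T^aa := Real.mul_rpow hu.le hT.le
      _ ≤ _ := by nlinarith

lemma Aweight_nonneg (N : ℕ) (k σ p R : ℝ) (hR : 1 ≤ R) : 0 ≤ Aweight N k σ p R := by
  have h0R : (0:ℝ) < R := by linarith
  have hlog : 0 ≤ Real.log R := Real.log_nonneg hR
  rw [Aweight]
  split_ifs
  · have := Real.rpow_nonneg h0R.le ((N:ℝ) + k - σ/(p-1)); linarith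
  · have := Real.rpow_nonneg h0R.le (2 - σ/(p-1)); linarith
  · have := Real.rpow_nonneg h0R.le (2 - σ/(p-1)); nlinarith

set_option maxHeartbeats 2000000 in
lemma core_estimate (N : ℕ) (hN : 2 ≤ N) (k α σ p : ℝ) (hp : 1 < p)
    (ζ : ℝ → ℝ) (hζ : IsZeta ζ)
    (γ : ℝ) (cRf : ℝ → ℝ) (CA : ℝ) (hCA : 0 ≤ CA)
    (hcRf : ∀ R : ℝ, 2 ≤ R → 0 ≤ cRf R)
    (hD0 : ∀ x : Euc N, 1 ≤ ‖x‖ → 0 ≤ Dfun N k x)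
    (hD : ∀ R : ℝ, 2 ≤ R → ∀ x : Euc N, 1 ≤ ‖x‖ → ‖x‖ < 2*R →
      ‖x‖ ^ (-σ/(p-1)) * Dfun N k x ≤ cRf R * ‖x‖ ^ γ)
    (hA : ∀ R : ℝ, 2 ≤ R → cRf R * (Real.log (2*R) + (2*R) ^ ((N:ℝ)+γ)) ≤ CA * Aweight N k σ p R) :
    ∃ ℓ₀ : ℝ, ∀ ℓ : ℝ, ℓ₀ ≤ ℓ → ∃ C : ℝ, 0 < C ∧
      ∀ T : ℝ, 1 ≤ T → ∀ R : ℝ, 2 ≤ R → ∀ χ : Euc N → ℝ,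
        (∀ x, χ x ∈ Icc (0:ℝ) 1) → (support χ ⊆ ball (0 : Euc N) (2*R)) →
        I1 N α σ p (fun z => iota ζ T ℓ z.1 * (Dfun N k z.2 * χ z.2 ^ ℓ)) ≤
          ENNReal.ofReal (C * T ^ (1 - (α + p)/(p-1)) * Aweight N k σ p R) := by
  have hq : 0 < p - 1 := by linarith
  set a : ℝ := -α/(p-1) with ha
  set b : ℝ := -σ/(p-1) with hb
  set c : ℝ := -1/(p-1) with hc
  set d : ℝ := p/(p-1) with hd
  have hd0 : 0 < d := by rw [hd]; positivity
  have hc0 : c < 0 := by rw [hc]; exact div_neg_of_neg_of_pos (by norm_num) hq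
  have hcd : c + d = 1 := by rw [hc, hd]; field_simp; ring
  refine ⟨d + 2, fun ℓ hℓ => ?_⟩
  have hℓ1 : 1 ≤ ℓ := by linarith
  have hℓ0 : 0 < ℓ := by linarith
  have hℓne : ℓ ≠ 0 := hℓ0.ne'
  have hcne : c ≠ 0 := hc0.ne
  have hℓd : 0 ≤ ℓ - d := by linarith
  -- ζ setup
  have hKcpt : HasCompactSupport ζ := by
    rw [HasCompactSupport]
    exact Metric.isCompact_of_isClosed_isBounded (isClosed_tsupport ζ)
      ((Metric.isBounded_Ioo 0 1).subset hζ.supp)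
  have hKne : (tsupport ζ).Nonempty := by
    obtain ⟨s, hs⟩ := Function.ne_iff.1 hζ.ne_zero
    exact ⟨s, subset_tsupport ζ (by simpa [mem_support] using hs)⟩
  set s₀ := sInf (tsupport ζ) with hs₀def
  set s₁ := sSup (tsupport ζ) with hs₁def
  have hs₀K : s₀ ∈ tsupport ζ := hKcpt.sInf_mem hKne
  have hs₁K : s₁ ∈ tsupport ζ := hKcpt.sSup_mem hKne
  have hs₀ : 0 < s₀ := (hζ.supp hs₀K).1
  have hs₁ : s₁ < 1 := (hζ.supp hs₁K).2
  have hs₁0 : 0 < s₁ := (hζ.supp hs₁K).1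
  have hKsub : tsupport ζ ⊆ Icc s₀ s₁ := fun u hu =>
    ⟨csInf_le hKcpt.isBounded.bddBelow hu, le_csSup hKcpt.isBounded.bddAbove hu⟩
  obtain ⟨Mz, hMz⟩ := hKcpt.exists_bound_of_continuous hζ.smooth.continuous
  have hMz0 : 0 ≤ Mz := le_trans (norm_nonneg _) (hMz 0)
  have hζdiff : Differentiable ℝ ζ := hζ.smooth.differentiable (by simp)
  have hζdc : Continuous (deriv ζ) := hζ.smooth.continuous_deriv (by exact_mod_cast le_top)
  obtain ⟨Mz', hMz'⟩ := hKcpt.deriv.exists_bound_of_continuous hζdc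
  have hMz'0 : 0 ≤ Mz' := le_trans (norm_nonneg _) (hMz' 0)
  -- derivative of iota
  have hι : ∀ T : ℝ, 0 < T → ∀ t : ℝ,
      HasDerivAt (iota ζ T ℓ) (deriv ζ (t/T) * (1/T) * ℓ * ζ (t/T) ^ (ℓ - 1)) t := by
    intro T hT t
    have h1 : HasDerivAt (fun s : ℝ => s / T) (1/T) t := by
      simpa using (hasDerivAt_id t).div_const T
    have h2 : HasDerivAt ζ (deriv ζ (t/T)) (t/T) := (hζdiff (t/T)).hasDerivAt
    have h3 : HasDerivAt (fun s : ℝ => ζ (s / T)) (deriv ζ (t/T) * (1/T)) t := h2.comp t h1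
    have h4 := h3.rpow_const (p := ℓ) (Or.inr hℓ1)
    exact h4
  set Cg : ℝ := (s₀ ^ a + s₁ ^ a) * (1 + Mz) ^ (ℓ - d) * ((1 + Mz') ^ d * ℓ ^ d) with hCgdef
  have hCg0 : 0 ≤ Cg := by
    rw [hCgdef]
    have := Real.rpow_nonneg hs₀.le a
    have := Real.rpow_nonneg hs₁0.le a
    positivity
  set CN0 : ℝ := (N : ℝ) * (volume (ball (0:Euc N) 1)).toReal *
      ((1/|(N:ℝ)+γ| + 2) * (1/Real.log 2 + 2)) with hCN0def
  have hCN00 : 0 ≤ CN0 := by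
    rw [hCN0def]
    have h1 : (0:ℝ) ≤ (volume (ball (0:Euc N) 1)).toReal := ENNReal.toReal_nonneg
    have h2 : (0:ℝ) ≤ 1/|(N:ℝ)+γ| := by positivity
    have h3 : (0:ℝ) < Real.log 2 := Real.log_pos (by norm_num)
    have h4 : (0:ℝ) ≤ 1/Real.log 2 := by positivity
    positivity
  refine ⟨Cg * (CN0 * CA) + 1, by positivity, ?_⟩
  intro T hT R hR χ hχ hχsupp
  have hT0 : 0 < T := by linarith
  have hR0 : 0 < R := by linarith
  have h2R : (2:ℝ) ≤ 2*R := by linarith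
  set μf : ℝ × Euc N → ℝ := fun z => iota ζ T ℓ z.1 * (Dfun N k z.2 * χ z.2 ^ ℓ) with hμf
  set w : ℝ → ℝ := (Ico (1:ℝ) (2*R)).indicator (fun r => cRf R * r ^ γ) with hwdef
  have hwnn : ∀ r, 0 ≤ w r := by
    intro r
    apply indicator_nonneg
    intro y hy
    have h0y : (0:ℝ) < y := lt_of_lt_of_le zero_lt_one hy.1
    have := hcRf R hR
    positivity
  have hwmeas : Measurable w :=
    Measurable.indicator ((meas_rpow_const γ).const_mul (cRf R)) measurableSet_Ico
  set f₁ : ℝ → ℝ≥0∞ := (Icc (s₀*T) (s₁*T)).indicator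
      (fun _ => ENNReal.ofReal (Cg * T ^ (a - d))) with hf₁def
  set f₂ : Euc N → ℝ≥0∞ := fun x => ENNReal.ofReal (w ‖x‖) with hf₂def
  have hf₁m : Measurable f₁ := measurable_const.indicator measurableSet_Icc
  have hf₂m : Measurable f₂ := ENNReal.measurable_ofReal.comp (hwmeas.comp measurable_norm)
  have hSmeas : MeasurableSet (OmegaSet N) := measurableSet_Ioi.prod measurableSet_ball.compl
  have key : ∀ z ∈ OmegaSet N,
      ENNReal.ofReal (z.1 ^ a * ‖z.2‖ ^ b * μf z ^ c * |dtD μf z| ^ d) ≤ f₁ z.1 * f₂ z.2 := by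
    rintro ⟨t, x⟩ hz
    have ht0 : (0:ℝ) < t := hz.1
    have hx1 : 1 ≤ ‖x‖ := by
      have hxx : x ∉ ball (0 : Euc N) 1 := hz.2
      simpa [mem_ball, dist_zero_right, not_lt] using hxx
    set Z := ζ (t/T) with hZ
    set W := deriv ζ (t/T) with hW
    have hdtD : dtD μf (t, x) = W * (1/T) * ℓ * Z ^ (ℓ - 1) * (Dfun N k x * χ x ^ ℓ) := by
      show deriv (fun s => μf (s, x)) t = _
      have h1 : (fun s => μf (s, x)) = fun s => iota ζ T ℓ s * (Dfun N k x * χ x ^ ℓ) := rfl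
      rw [h1, deriv_mul_const ((hι T hT0 t).differentiableAt) (Dfun N k x * χ x ^ ℓ),
        (hι T hT0 t).deriv]
    by_cases hzz : Z = 0
    · have h0 : μf (t, x) ^ c = 0 := by
        show (iota ζ T ℓ t * (Dfun N k x * χ x ^ ℓ)) ^ c = 0
        rw [iota, ← hZ, hzz, Real.zero_rpow hℓne, zero_mul, Real.zero_rpow hcne]
      rw [h0, mul_zero, zero_mul, ENNReal.ofReal_zero]
      exact zero_le
    · have hzpos : 0 < Z := lt_of_le_of_ne (hζ.nonneg _) (Ne.symm hzz)
      have hsmem : t/T ∈ Icc s₀ s₁ :=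
        hKsub (subset_tsupport ζ (mem_support.2 (by rw [← hZ]; exact hzz)))
      have htmem : t ∈ Icc (s₀*T) (s₁*T) := by
        have e : t/T*T = t := div_mul_cancel₀ t hT0.ne'
        exact ⟨by nlinarith [hsmem.1], by nlinarith [hsmem.2]⟩
      have hF0 : 0 ≤ Dfun N k x * χ x ^ ℓ :=
        mul_nonneg (hD0 x hx1) (Real.rpow_nonneg (hχ x).1 ℓ)
      have hZℓ0 : (0:ℝ) ≤ Z ^ ℓ := Real.rpow_nonneg (hζ.nonneg _) ℓ
      have hZl1 : (0:ℝ) ≤ Z ^ (ℓ-1) := Real.rpow_nonneg (hζ.nonneg _) _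
      have e2 : μf (t,x) ^ c = Z ^ (ℓ * c) * (Dfun N k x * χ x ^ ℓ) ^ c := by
        show (iota ζ T ℓ t * (Dfun N k x * χ x ^ ℓ)) ^ c = _
        rw [iota, ← hZ, Real.mul_rpow hZℓ0 hF0, ← Real.rpow_mul (hζ.nonneg _)]
      have e3 : |dtD μf (t,x)| ^ d
          = |W| ^ d * ((1/T) ^ d * (ℓ ^ d * (Z ^ ((ℓ-1)*d) * (Dfun N k x * χ x ^ ℓ) ^ d))) := by
        rw [hdtD]
        have n1 : (0:ℝ) ≤ Z ^ (ℓ-1) * (Dfun N k x * χ x ^ ℓ) := mul_nonneg hZl1 hF0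
        have n2 : (0:ℝ) ≤ ℓ * (Z ^ (ℓ-1) * (Dfun N k x * χ x ^ ℓ)) := mul_nonneg hℓ0.le n1
        have n3 : (0:ℝ) ≤ (1/T) * (ℓ * (Z ^ (ℓ-1) * (Dfun N k x * χ x ^ ℓ))) :=
          mul_nonneg (by positivity) n2
        have habs : |W * (1/T) * ℓ * Z ^ (ℓ - 1) * (Dfun N k x * χ x ^ ℓ)|
            = |W| * ((1/T) * (ℓ * (Z ^ (ℓ - 1) * (Dfun N k x * χ x ^ ℓ)))) := by
          rw [abs_mul, abs_mul, abs_mul, abs_mul, abs_of_pos (by positivity : (0:ℝ) < 1/T),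
            abs_of_pos hℓ0, abs_of_nonneg hZl1, abs_of_nonneg hF0]
          ring
        rw [habs, Real.mul_rpow (abs_nonneg W) n3, Real.mul_rpow (by positivity : (0:ℝ) ≤ 1/T) n2,
          Real.mul_rpow hℓ0.le n1, Real.mul_rpow hZl1 hF0, ← Real.rpow_mul (hζ.nonneg _)]
      have eZ : Z ^ (ℓ * c) * Z ^ ((ℓ-1)*d) = Z ^ (ℓ - d) := by
        rw [← Real.rpow_add hzpos]
        congr 1
        linear_combination ℓ * hcd
      have eF : (Dfun N k x * χ x ^ ℓ) ^ c * (Dfun N k x * χ x ^ ℓ) ^ d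
          = Dfun N k x * χ x ^ ℓ := by
        rw [← Real.rpow_add' hF0 (by rw [hcd]; exact one_ne_zero), hcd, Real.rpow_one]
      have hfac : t ^ a * ‖x‖ ^ b * μf (t,x) ^ c * |dtD μf (t,x)| ^ d
          = (t ^ a * (Z ^ (ℓ * c) * Z ^ ((ℓ-1)*d)) * (|W| ^ d * (1/T) ^ d * ℓ ^ d))
            * (‖x‖ ^ b * ((Dfun N k x * χ x ^ ℓ) ^ c * (Dfun N k x * χ x ^ ℓ) ^ d)) := by
        rw [e2, e3]; ring
      rw [hfac, eZ, eF]
      have hf₁val : f₁ t = ENNReal.ofReal (Cg * T ^ (a - d)) := by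
        rw [hf₁def, indicator_of_mem htmem]
      rw [hf₁val]
      have hG : t ^ a * Z ^ (ℓ - d) * (|W| ^ d * (1/T) ^ d * ℓ ^ d) ≤ Cg * T ^ (a - d) := by
        have b1 : t ^ a ≤ (s₀ ^ a + s₁ ^ a) * T ^ a := tpow_bound hs₀ hT0 htmem
        have b2 : Z ^ (ℓ - d) ≤ (1 + Mz) ^ (ℓ - d) := by
          apply Real.rpow_le_rpow (hζ.nonneg _) _ hℓd
          have hb := hMz (t/T)
          rw [Real.norm_eq_abs] at hb
          calc Z ≤ |Z| := le_abs_self Z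
            _ ≤ Mz := hb
            _ ≤ 1 + Mz := by linarith
        have b3 : |W| ^ d ≤ (1 + Mz') ^ d := by
          apply Real.rpow_le_rpow (abs_nonneg _) _ hd0.le
          have hb := hMz' (t/T)
          rw [Real.norm_eq_abs] at hb
          calc |W| ≤ Mz' := hb
            _ ≤ 1 + Mz' := by linarith
        have n1 : 0 ≤ t^a := Real.rpow_nonneg ht0.le a
        have n2 : 0 ≤ Z^(ℓ-d) := Real.rpow_nonneg (hζ.nonneg _) _
        have n3 : 0 ≤ (1/T)^d := Real.rpow_nonneg (by positivity) d
        have n4 : 0 ≤ ℓ^d := Real.rpow_nonneg hℓ0.le d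
        have n5 : 0 ≤ |W|^d := Real.rpow_nonneg (abs_nonneg W) d
        have n6 : 0 ≤ (s₀^a + s₁^a) * T^a :=
          mul_nonneg (add_nonneg (Real.rpow_nonneg hs₀.le a) (Real.rpow_nonneg hs₁0.le a))
            (Real.rpow_nonneg hT0.le a)
        have n7 : 0 ≤ (1+Mz)^(ℓ-d) := Real.rpow_nonneg (by linarith) _
        have n8 : 0 ≤ (1+Mz')^d := Real.rpow_nonneg (by linarith) _
        calc t ^ a * Z ^ (ℓ - d) * (|W| ^ d * (1/T) ^ d * ℓ ^ d)
            ≤ ((s₀^a + s₁^a) * T^a) * (1+Mz)^(ℓ-d) * ((1+Mz')^d * (1/T)^d * ℓ^d) := by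
              apply mul_le_mul (mul_le_mul b1 b2 n2 n6)
              · apply mul_le_mul_of_nonneg_right _ n4
                exact mul_le_mul_of_nonneg_right b3 n3
              · positivity
              · exact mul_nonneg n6 n7
          _ = Cg * (T^a * (1/T)^d) := by rw [hCgdef]; ring
          _ = Cg * T^(a-d) := by
              congr 1
              rw [one_div, Real.inv_rpow hT0.le, ← Real.rpow_neg hT0.le, ← Real.rpow_add hT0,
                sub_eq_add_neg]
      have hX : ‖x‖ ^ b * (Dfun N k x * χ x ^ ℓ) ≤ w ‖x‖ := by
        rcases lt_or_ge ‖x‖ (2*R) with h2 | h2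
        · rw [hwdef, indicator_of_mem (show ‖x‖ ∈ Ico (1:ℝ) (2*R) from ⟨hx1, h2⟩)]
          have hχ1 : χ x ^ ℓ ≤ 1 := Real.rpow_le_one (hχ x).1 (hχ x).2 hℓ0.le
          calc ‖x‖ ^ b * (Dfun N k x * χ x ^ ℓ) ≤ ‖x‖ ^ b * (Dfun N k x * 1) := by
                apply mul_le_mul_of_nonneg_left _ (Real.rpow_nonneg (norm_nonneg x) b)
                exact mul_le_mul_of_nonneg_left hχ1 (hD0 x hx1)
            _ = ‖x‖ ^ b * Dfun N k x := by ring
            _ ≤ cRf R * ‖x‖ ^ γ := hD R hR x hx1 h2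
        · have hχ0 : χ x = 0 := by
            by_contra hne
            have hmem := hχsupp (mem_support.2 hne)
            rw [mem_ball, dist_zero_right] at hmem
            linarith
          rw [hχ0, Real.zero_rpow hℓne, mul_zero, mul_zero]
          exact hwnn _
      have hXnn : 0 ≤ ‖x‖ ^ b * (Dfun N k x * χ x ^ ℓ) :=
        mul_nonneg (Real.rpow_nonneg (norm_nonneg x) b) hF0
      have hGnn : 0 ≤ Cg * T ^ (a-d) := mul_nonneg hCg0 (Real.rpow_nonneg hT0.le _)
      calc ENNReal.ofReal ((t ^ a * Z ^ (ℓ - d) * (|W| ^ d * (1/T) ^ d * ℓ ^ d))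
              * (‖x‖ ^ b * (Dfun N k x * χ x ^ ℓ)))
          ≤ ENNReal.ofReal ((Cg * T^(a-d)) * w ‖x‖) := by
            apply ENNReal.ofReal_le_ofReal
            exact mul_le_mul hG hX hXnn hGnn
        _ = ENNReal.ofReal (Cg * T^(a-d)) * f₂ x := ENNReal.ofReal_mul hGnn
  have he : a - d + 1 = 1 - (α + p)/(p-1) := by rw [ha, hd]; ring
  have hAw : 0 ≤ Aweight N k σ p R := Aweight_nonneg N k σ p R (by linarith)
  have hTe : 0 ≤ T ^ (1 - (α + p)/(p-1)) := Real.rpow_nonneg hT0.le _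
  calc I1 N α σ p μf
      = ∫⁻ z in OmegaSet N,
          ENNReal.ofReal (z.1 ^ a * ‖z.2‖ ^ b * μf z ^ c * |dtD μf z| ^ d) := rfl
    _ ≤ ∫⁻ z in OmegaSet N, f₁ z.1 * f₂ z.2 :=
        lintegral_mono_ae (ae_restrict_of_forall_mem hSmeas key)
    _ = (∫⁻ t in Ioi (0:ℝ), f₁ t) * (∫⁻ x in extDom N, f₂ x) := by
        have hmeq : (volume : Measure (ℝ × Euc N)).restrict (OmegaSet N)
            = ((volume : Measure ℝ).restrict (Ioi 0)).prod
              ((volume : Measure (Euc N)).restrict (extDom N)) := by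
          rw [OmegaSet, Measure.volume_eq_prod, Measure.prod_restrict]
        rw [hmeq, lintegral_prod_mul hf₁m.aemeasurable hf₂m.aemeasurable]
    _ ≤ ENNReal.ofReal (Cg * T ^ (a - d + 1))
          * ENNReal.ofReal (CN0 * (CA * Aweight N k σ p R)) := by
        apply mul_le_mul'
        · rw [hf₁def, lintegral_indicator measurableSet_Icc, setLIntegral_const]
          have h1 : (volume.restrict (Ioi (0:ℝ))) (Icc (s₀*T) (s₁*T)) ≤ ENNReal.ofReal T := by
            rw [Measure.restrict_apply measurableSet_Icc]
            refine le_trans (measure_mono inter_subset_left) ?_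
            rw [Real.volume_Icc]
            apply ENNReal.ofReal_le_ofReal
            nlinarith
          refine le_trans (mul_le_mul_right h1 _) ?_
          rw [← ENNReal.ofReal_mul (by positivity : (0:ℝ) ≤ Cg * T ^ (a-d))]
          apply ENNReal.ofReal_le_ofReal
          rw [Real.rpow_add_one hT0.ne']
          exact le_of_eq (by ring)
        · calc ∫⁻ x in extDom N, f₂ x ≤ ∫⁻ x, f₂ x := setLIntegral_le_lintegral _ _
            _ ≤ ENNReal.ofReal (CN0 * (cRf R * (Real.log (2*R) + (2*R) ^ ((N:ℝ)+γ)))) :=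
                radial_bound N hN γ (cRf R) (2*R) (hcRf R hR) h2R
            _ ≤ ENNReal.ofReal (CN0 * (CA * Aweight N k σ p R)) := by
                apply ENNReal.ofReal_le_ofReal
                exact mul_le_mul_of_nonneg_left (hA R hR) hCN00
    _ = ENNReal.ofReal (Cg * T ^ (a - d + 1) * (CN0 * (CA * Aweight N k σ p R))) :=
        (ENNReal.ofReal_mul (by positivity)).symm
    _ ≤ ENNReal.ofReal ((Cg * (CN0 * CA) + 1) * T ^ (1 - (α + p)/(p-1))
          * Aweight N k σ p R) := by
        apply ENNReal.ofReal_le_ofReal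
        rw [he]
        have h1 : Cg * T ^ (1 - (α + p)/(p-1)) * (CN0 * (CA * Aweight N k σ p R))
            = (Cg * (CN0 * CA)) * (T ^ (1 - (α + p)/(p-1)) * Aweight N k σ p R) := by ring
        have h2 : (Cg * (CN0 * CA) + 1) * T ^ (1 - (α + p)/(p-1)) * Aweight N k σ p R
            = (Cg * (CN0 * CA) + 1) * (T ^ (1 - (α + p)/(p-1)) * Aweight N k σ p R) := by ring
        rw [h1, h2]
        exact mul_le_mul_of_nonneg_right (by linarith) (mul_nonneg hTe hAw)

set_option maxHeartbeats 1000000 in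
lemma main_aux (N : ℕ) (hN : 2 ≤ N) (k α σ p : ℝ) (hp : 1 < p)
    (ζ : ℝ → ℝ) (hζ : IsZeta ζ) :
    ∃ ℓ₀ : ℝ, ∀ ℓ : ℝ, ℓ₀ ≤ ℓ → ∃ C : ℝ, 0 < C ∧
      ∀ T : ℝ, 1 ≤ T → ∀ R : ℝ, 2 ≤ R → ∀ χ : Euc N → ℝ,
        (∀ x, χ x ∈ Icc (0:ℝ) 1) → (support χ ⊆ ball (0 : Euc N) (2*R)) →
        I1 N α σ p (fun z => iota ζ T ℓ z.1 * (Dfun N k z.2 * χ z.2 ^ ℓ)) ≤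
          ENNReal.ofReal (C * T ^ (1 - (α + p)/(p-1)) * Aweight N k σ p R) := by
  have hq : 0 < p - 1 := by linarith
  have hlog2 : 0 < Real.log 2 := Real.log_pos (by norm_num)
  rcases lt_trichotomy k (2 - (N:ℝ)) with hk | hk | hk
  · -- case k < 2 - N
    set γ : ℝ := -σ/(p-1) + (2-(N:ℝ)) with hγ
    have hnk : ¬ (2 - (N:ℝ) < k) := by linarith
    apply core_estimate N hN k α σ p hp ζ hζ γ (fun _ => 1) (2 + 2 ^ ((N:ℝ)+γ))
    · have : (0:ℝ) ≤ 2 ^ ((N:ℝ)+γ) := Real.rpow_nonneg (by norm_num) _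
      linarith
    · intro R hR; norm_num
    · intro x hx
      rw [Dfun, if_neg hnk, if_pos hk]
      have h1 : ‖x‖ ^ (k - 2 + (N:ℝ)) ≤ 1 :=
        Real.rpow_le_one_of_one_le_of_nonpos hx (by linarith)
      have h2 : (0:ℝ) ≤ ‖x‖ ^ (2 - (N:ℝ)) := Real.rpow_nonneg (norm_nonneg x) _
      nlinarith
    · intro R hR x hx hx2
      rw [Dfun, if_neg hnk, if_pos hk]
      have hx0 : (0:ℝ) < ‖x‖ := lt_of_lt_of_le zero_lt_one hx
      have h1 : ‖x‖ ^ (k - 2 + (N:ℝ)) ≤ 1 :=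
        Real.rpow_le_one_of_one_le_of_nonpos hx (by linarith)
      have h2 : (0:ℝ) ≤ ‖x‖ ^ (2 - (N:ℝ)) := Real.rpow_nonneg (norm_nonneg x) _
      have h3 : (0:ℝ) ≤ ‖x‖ ^ (-σ/(p-1)) := Real.rpow_nonneg (norm_nonneg x) _
      have key : ‖x‖ ^ (-σ/(p-1)) * ‖x‖ ^ (2-(N:ℝ)) = ‖x‖ ^ γ := (Real.rpow_add hx0 _ _).symm
      have h4 : (0:ℝ) ≤ ‖x‖ ^ (k - 2 + (N:ℝ)) := Real.rpow_nonneg (norm_nonneg x) _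
      calc ‖x‖ ^ (-σ/(p-1)) * (‖x‖ ^ (2-(N:ℝ)) * (1 - ‖x‖ ^ (k - 2 + (N:ℝ))))
          ≤ ‖x‖ ^ (-σ/(p-1)) * ‖x‖ ^ (2-(N:ℝ)) := by
            nlinarith [mul_nonneg (mul_nonneg h3 h2) h4]
        _ = 1 * ‖x‖ ^ γ := by rw [key, one_mul]
    · intro R hR
      have hR0 : (0:ℝ) < R := by linarith
      have hlogR : Real.log 2 ≤ Real.log R := Real.log_le_log (by norm_num) hR
      rw [Aweight, if_neg hnk, if_pos hk,
        show 2 - σ/(p-1) = (N:ℝ) + γ from by rw [hγ]; ring]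
      have hlog2R : Real.log (2*R) = Real.log 2 + Real.log R :=
        Real.log_mul (by norm_num) (by linarith)
      have h2β : (2*R) ^ ((N:ℝ)+γ) = 2 ^ ((N:ℝ)+γ) * R ^ ((N:ℝ)+γ) :=
        Real.mul_rpow (by norm_num) hR0.le
      have hm : (0:ℝ) ≤ 2 ^ ((N:ℝ)+γ) := Real.rpow_nonneg (by norm_num) _
      have hr : (0:ℝ) ≤ R ^ ((N:ℝ)+γ) := Real.rpow_nonneg hR0.le _
      rw [hlog2R, h2β, one_mul]
      nlinarith [mul_nonneg hm hr, mul_nonneg hm (le_trans hlog2.le hlogR)]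
  · -- case k = 2 - N
    set γ : ℝ := -σ/(p-1) + (2-(N:ℝ)) with hγ
    have hnk : ¬ (2 - (N:ℝ) < k) := by linarith
    have hnk2 : ¬ (k < 2 - (N:ℝ)) := by linarith
    apply core_estimate N hN k α σ p hp ζ hζ γ (fun R => Real.log (2*R))
        (2 * (2 + 2 ^ ((N:ℝ)+γ)))
    · have : (0:ℝ) ≤ 2 ^ ((N:ℝ)+γ) := Real.rpow_nonneg (by norm_num) _
      linarith
    · intro R hR
      exact Real.log_nonneg (by linarith)
    · intro x hx
      rw [Dfun, if_neg hnk, if_neg hnk2]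
      exact mul_nonneg (Real.rpow_nonneg (norm_nonneg x) _) (Real.log_nonneg hx)
    · intro R hR x hx hx2
      rw [Dfun, if_neg hnk, if_neg hnk2]
      have hx0 : (0:ℝ) < ‖x‖ := lt_of_lt_of_le zero_lt_one hx
      have hlx : Real.log ‖x‖ ≤ Real.log (2*R) := Real.log_le_log hx0 hx2.le
      have hlx0 : 0 ≤ Real.log ‖x‖ := Real.log_nonneg hx
      have key : ‖x‖ ^ (-σ/(p-1)) * ‖x‖ ^ (2-(N:ℝ)) = ‖x‖ ^ γ := (Real.rpow_add hx0 _ _).symm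
      have h3 : (0:ℝ) ≤ ‖x‖ ^ γ := Real.rpow_nonneg (norm_nonneg x) _
      calc ‖x‖ ^ (-σ/(p-1)) * (‖x‖ ^ (2-(N:ℝ)) * Real.log ‖x‖)
          = (‖x‖ ^ (-σ/(p-1)) * ‖x‖ ^ (2-(N:ℝ))) * Real.log ‖x‖ := by ring
        _ = ‖x‖ ^ γ * Real.log ‖x‖ := by rw [key]
        _ ≤ ‖x‖ ^ γ * Real.log (2*R) := mul_le_mul_of_nonneg_left hlx h3
        _ = Real.log (2*R) * ‖x‖ ^ γ := by ring
    · intro R hR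
      have hR0 : (0:ℝ) < R := by linarith
      have hlogR : Real.log 2 ≤ Real.log R := Real.log_le_log (by norm_num) hR
      have hlogR0 : 0 ≤ Real.log R := le_trans hlog2.le hlogR
      rw [Aweight, if_neg hnk, if_neg hnk2,
        show 2 - σ/(p-1) = (N:ℝ) + γ from by rw [hγ]; ring]
      have hlog2R : Real.log (2*R) = Real.log 2 + Real.log R :=
        Real.log_mul (by norm_num) (by linarith)
      have h2β : (2*R) ^ ((N:ℝ)+γ) = 2 ^ ((N:ℝ)+γ) * R ^ ((N:ℝ)+γ) :=
        Real.mul_rpow (by norm_num) hR0.le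
      have hm : (0:ℝ) ≤ 2 ^ ((N:ℝ)+γ) := Real.rpow_nonneg (by norm_num) _
      have hr : (0:ℝ) ≤ R ^ ((N:ℝ)+γ) := Real.rpow_nonneg hR0.le _
      rw [hlog2R, h2β]
      nlinarith [mul_nonneg hm hr, mul_nonneg hm hlogR0, mul_nonneg hlogR0 hr,
        mul_nonneg hm (mul_nonneg hlogR0 hr), sq_nonneg (Real.log R - Real.log 2),
        mul_nonneg hlogR0 hlogR0, mul_nonneg hm (mul_nonneg hlogR0 hlogR0),
        mul_le_mul_of_nonneg_right (mul_le_mul_of_nonneg_right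
          (show Real.log 2 + Real.log R ≤ 2 * Real.log R from by linarith) hm) hr]
  · -- case 2 - N < k
    set γ : ℝ := -σ/(p-1) + k with hγ
    apply core_estimate N hN k α σ p hp ζ hζ γ (fun _ => 1) (2 + 2 ^ ((N:ℝ)+γ))
    · have : (0:ℝ) ≤ 2 ^ ((N:ℝ)+γ) := Real.rpow_nonneg (by norm_num) _
      linarith
    · intro R hR; norm_num
    · intro x hx
      rw [Dfun, if_pos hk]
      have h1 : ‖x‖ ^ (2 - (N:ℝ) - k) ≤ 1 :=
        Real.rpow_le_one_of_one_le_of_nonpos hx (by linarith)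
      have h2 : (0:ℝ) ≤ ‖x‖ ^ k := Real.rpow_nonneg (norm_nonneg x) _
      nlinarith
    · intro R hR x hx hx2
      rw [Dfun, if_pos hk]
      have hx0 : (0:ℝ) < ‖x‖ := lt_of_lt_of_le zero_lt_one hx
      have h1 : ‖x‖ ^ (2 - (N:ℝ) - k) ≤ 1 :=
        Real.rpow_le_one_of_one_le_of_nonpos hx (by linarith)
      have h2 : (0:ℝ) ≤ ‖x‖ ^ k := Real.rpow_nonneg (norm_nonneg x) _
      have h3 : (0:ℝ) ≤ ‖x‖ ^ (-σ/(p-1)) := Real.rpow_nonneg (norm_nonneg x) _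
      have key : ‖x‖ ^ (-σ/(p-1)) * ‖x‖ ^ k = ‖x‖ ^ γ := (Real.rpow_add hx0 _ _).symm
      have h4 : (0:ℝ) ≤ ‖x‖ ^ (2 - (N:ℝ) - k) := Real.rpow_nonneg (norm_nonneg x) _
      calc ‖x‖ ^ (-σ/(p-1)) * (‖x‖ ^ k * (1 - ‖x‖ ^ (2 - (N:ℝ) - k)))
          ≤ ‖x‖ ^ (-σ/(p-1)) * ‖x‖ ^ k := by
            nlinarith [mul_nonneg (mul_nonneg h3 h2) h4]
        _ = 1 * ‖x‖ ^ γ := by rw [key, one_mul]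
    · intro R hR
      have hR0 : (0:ℝ) < R := by linarith
      have hlogR : Real.log 2 ≤ Real.log R := Real.log_le_log (by norm_num) hR
      rw [Aweight, if_pos hk,
        show (N:ℝ) + k - σ/(p-1) = (N:ℝ) + γ from by rw [hγ]; ring]
      have hlog2R : Real.log (2*R) = Real.log 2 + Real.log R :=
        Real.log_mul (by norm_num) (by linarith)
      have h2β : (2*R) ^ ((N:ℝ)+γ) = 2 ^ ((N:ℝ)+γ) * R ^ ((N:ℝ)+γ) :=
        Real.mul_rpow (by norm_num) hR0.le
      have hm : (0:ℝ) ≤ 2 ^ ((N:ℝ)+γ) := Real.rpow_nonneg (by norm_num) _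
      have hr : (0:ℝ) ≤ R ^ ((N:ℝ)+γ) := Real.rpow_nonneg hR0.le _
      rw [hlog2R, h2β, one_mul]
      nlinarith [mul_nonneg hm hr, mul_nonneg hm (le_trans hlog2.le hlogR)]
/-- **Lemma 2.9**: for `μ = ψ` or `μ = ψ*`, where `ψ(t,x) = ι(t) 𝒟(x) ξ_R(x)^ℓ` and
`ψ*(t,x) = ι(t) 𝒟(x) η_R(x)^ℓ`, for all sufficiently large `ℓ` there is `C > 0`
independent of `T, R` such that, for all sufficiently large `T` and `R`,
`I₁(μ) ≤ C T^{1−(α+p)/(p−1)} A(R)`. -/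
theorem I1_estimate_dirichlet_test_functions (N : ℕ) (hN : 2 ≤ N) (k α σ p : ℝ)
    (hα : -1 ≤ α) (hp : 1 < p)
    (ζ : ℝ → ℝ) (hζ : IsZeta ζ)
    (ξ : ℝ → Euc N → ℝ) (hξ : IsXiFamily N ξ)
    (η : ℝ → Euc N → ℝ) (hη : IsEtaFamily N η) :
    ∃ ℓ₀ : ℝ, ∀ ℓ : ℝ, ℓ₀ ≤ ℓ → ∃ C : ℝ, 0 < C ∧ ∃ T₀ R₀ : ℝ,
      ∀ T : ℝ, T₀ ≤ T → ∀ R : ℝ, R₀ ≤ R →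
        I1 N α σ p (fun z => iota ζ T ℓ z.1 * (Dfun N k z.2 * ξ R z.2 ^ ℓ))
          ≤ ENNReal.ofReal (C * T ^ (1 - (α + p) / (p - 1)) * Aweight N k σ p R) ∧
        I1 N α σ p (fun z => iota ζ T ℓ z.1 * (Dfun N k z.2 * η R z.2 ^ ℓ))
          ≤ ENNReal.ofReal (C * T ^ (1 - (α + p) / (p - 1)) * Aweight N k σ p R) := by
  obtain ⟨ℓ₀, h⟩ := main_aux N hN k α σ p hp ζ hζ
  refine ⟨ℓ₀, fun ℓ hℓ => ?_⟩
  obtain ⟨C, hC, hbound⟩ := h ℓ hℓ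
  refine ⟨C, hC, 1, 2, fun T hT R hR => ?_⟩
  constructor
  · exact hbound T hT R hR (ξ R) (hξ.mem_Icc R) (hξ.supp R (by linarith))
  · refine hbound T hT R hR (η R) (hη.mem_Icc R) ?_
    exact subset_trans (hη.supp R (by linarith)) (ball_subset_ball (by linarith))
end
end

section
/- Let N ≥ 2, k > 2 − N, σ > −2, and p > 1 + (σ + 2)/(N + k − 2). Let δ satisfy 2 − N − k < δ < −(σ + 2)/(p − 1) < 0 and let ε satisfy 0 < ε < [δ(2 − N − k − δ)]^{1/(p−1)}. Then the function u(x) = ε |x|^δ satisfies the stationary differential inequality Δu(x) + k (x/|x|²)·∇u(x) + |x|^σ u(x)^p ≤ 0 for every x ∈ ℝ^N with |x| ≥ 1; equivalently, u is a positive stationary (super)solution of ∂_t u − Δu − k (x/|x|²)·∇u ≥ |x|^σ u^p on B₁^c. -/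
open MeasureTheory Metric Set Function

noncomputable section

variable {E : Type*} [NormedAddCommGroup E] [InnerProductSpace ℝ E]

lemma myHasFDerivAt {x : E} (hx : x ≠ 0) (a : ℝ) :
    HasFDerivAt (fun x : E ↦ ‖x‖ ^ a) ((a * ‖x‖ ^ (a - 2)) • innerSL ℝ x) x := by
  apply HasStrictFDerivAt.hasFDerivAt
  convert (hasStrictFDerivAt_norm_sq x).rpow_const (p := a / 2) (by simp [hx]) using 0
  simp_rw [← Real.rpow_natCast_mul (norm_nonneg _), ← Nat.cast_smul_eq_nsmul ℝ, smul_smul]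
  ring_nf

lemma second_dir (N : ℕ) (ε a : ℝ) {x : Euc N} (hx : x ≠ 0) (i : Fin N) :
    fderiv ℝ (fun y : Euc N => fderiv ℝ (fun z : Euc N => ε * ‖z‖ ^ a) y
        (EuclideanSpace.single i 1)) x (EuclideanSpace.single i 1)
      = ε * a * ‖x‖ ^ (a - 2) + ε * a * (a - 2) * ‖x‖ ^ (a - 4) * (x i) ^ 2 := by
  set e : Euc N := EuclideanSpace.single i 1 with he
  have hmem : {y : Euc N | y ≠ 0} ∈ nhds x := by
    exact isOpen_compl_singleton.mem_nhds hx
  have hev : (fun y : Euc N => fderiv ℝ (fun z : Euc N => ε * ‖z‖ ^ a) y e)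
      =ᶠ[nhds x] (fun y : Euc N => (ε * a * ‖y‖ ^ (a - 2)) * (innerSL ℝ e) y) := by
    refine Filter.eventually_of_mem hmem fun y hy => ?_
    show fderiv ℝ (fun z : Euc N => ε * ‖z‖ ^ a) y e = _
    rw [((myHasFDerivAt (show y ≠ 0 from hy) a).const_mul ε).fderiv]
    simp [he, EuclideanSpace.inner_single_right, EuclideanSpace.inner_single_left,
      real_inner_comm]
    ring
  rw [hev.fderiv_eq]
  have h1 : HasFDerivAt (fun y : Euc N => ε * a * ‖y‖ ^ (a - 2))
      ((ε * a) • (((a - 2) * ‖x‖ ^ (a - 2 - 2)) • innerSL ℝ x)) x :=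
    (myHasFDerivAt hx (a - 2)).const_mul (ε * a)
  have h2 := h1.mul (innerSL ℝ e).hasFDerivAt
  rw [show (fun y : Euc N => ε * a * ‖y‖ ^ (a - 2) * (innerSL ℝ e) y)
      = (fun y : Euc N => ε * a * ‖y‖ ^ (a - 2)) * ⇑(innerSL ℝ e) from rfl, h2.fderiv]
  have hee : (innerSL ℝ e) e = 1 := by
    simp [he, EuclideanSpace.inner_single_left, EuclideanSpace.single_apply]
  have hex : (innerSL ℝ e) x = x i := by
    simp [he, EuclideanSpace.inner_single_left]
  have hxe : (innerSL ℝ x) e = x i := by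
    simp [he, EuclideanSpace.inner_single_right]
  simp only [ContinuousLinearMap.add_apply, ContinuousLinearMap.smul_apply, smul_eq_mul,
    hee, hex, hxe]
  have : a - 2 - 2 = a - 4 := by ring
  rw [this]; ring

lemma sum_sq_eq (N : ℕ) (x : Euc N) : ∑ i : Fin N, (x i) ^ 2 = ‖x‖ ^ 2 := by
  have h : ‖x‖ = Real.sqrt (∑ i : Fin N, (x i) ^ 2) := by
    rw [EuclideanSpace.norm_eq]
    congr 1
    refine Finset.sum_congr rfl fun i _ => ?_
    rw [Real.norm_eq_abs, sq_abs]
  rw [h, Real.sq_sqrt (Finset.sum_nonneg fun i _ => sq_nonneg _)]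

lemma lapl_eps_rpow (N : ℕ) (ε a : ℝ) {x : Euc N} (hx : x ≠ 0) :
    lapl N (fun y => ε * ‖y‖ ^ a) x = ε * a * ((N : ℝ) + a - 2) * ‖x‖ ^ (a - 2) := by
  have hnx : (0:ℝ) < ‖x‖ := norm_pos_iff.mpr hx
  unfold lapl
  rw [Finset.sum_congr rfl fun i _ => second_dir N ε a hx i]
  rw [Finset.sum_add_distrib, Finset.sum_const, ← Finset.mul_sum, sum_sq_eq]
  have h2 : ‖x‖ ^ (a - 4) * ‖x‖ ^ (2:ℕ) = ‖x‖ ^ (a - 2) := by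
    rw [← Real.rpow_natCast ‖x‖ 2, ← Real.rpow_add hnx]
    norm_num
    rw [show a - 4 + 2 = a - 2 by ring]
  rw [Finset.card_univ, Fintype.card_fin]
  push_cast [nsmul_eq_mul]
  linear_combination ε * a * (a - 2) * h2

lemma grad_term (N : ℕ) (ε a : ℝ) {x : Euc N} (hx : x ≠ 0) :
    fderiv ℝ (fun y : Euc N => ε * ‖y‖ ^ a) x ((‖x‖ ^ 2)⁻¹ • x) = ε * a * ‖x‖ ^ (a - 2) := by
  have hnx : (0:ℝ) < ‖x‖ := norm_pos_iff.mpr hx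
  rw [((myHasFDerivAt hx a).const_mul ε).fderiv]
  simp only [ContinuousLinearMap.smul_apply, smul_eq_mul, innerSL_apply_apply,
    real_inner_smul_right, real_inner_self_eq_norm_sq]
  have h2 : (‖x‖:ℝ) ^ 2 ≠ 0 := by positivity
  field_simp

/-- For `k > 2 − N`, `σ > −2`, `p > 1 + (σ+2)/(N+k−2)` supercritical, suitable `δ` and
small `ε > 0`, the function `u(x) = ε |x|^δ` is a positive stationary supersolution:
`Δu + k (x/|x|²)·∇u + |x|^σ u^p ≤ 0` on the exterior of the unit ball. -/
theorem stationary_supersolution_supercritical (N : ℕ) (hN : 2 ≤ N) (k σ p δ ε : ℝ)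
    (hk : 2 - (N : ℝ) < k) (hσ : -2 < σ) (hp : 1 + (σ + 2) / ((N : ℝ) + k - 2) < p)
    (hδ₁ : 2 - (N : ℝ) - k < δ) (hδ₂ : δ < -(σ + 2) / (p - 1))
    (hδ₃ : -(σ + 2) / (p - 1) < 0)
    (hε₁ : 0 < ε) (hε₂ : ε < (δ * (2 - (N : ℝ) - k - δ)) ^ (1 / (p - 1))) :
    ∀ x : Euc N, 1 ≤ ‖x‖ →
      lapl N (fun y => ε * ‖y‖ ^ δ) x
        + k * fderiv ℝ (fun y : Euc N => ε * ‖y‖ ^ δ) x ((‖x‖ ^ 2)⁻¹ • x)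
        + ‖x‖ ^ σ * (ε * ‖x‖ ^ δ) ^ p ≤ 0 := by
  intro x hx1
  have hnx : (0:ℝ) < ‖x‖ := lt_of_lt_of_le one_pos hx1
  have hx : x ≠ 0 := norm_pos_iff.mp hnx
  rw [lapl_eps_rpow N ε δ hx, grad_term N ε δ hx]
  have hNk : (0:ℝ) < (N:ℝ) + k - 2 := by linarith
  have hσ2 : (0:ℝ) < σ + 2 := by linarith
  have hp1' : (0:ℝ) < p - 1 := by
    have := div_pos hσ2 hNk; linarith
  have hδ0 : δ < 0 := lt_trans hδ₂ hδ₃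
  have hC : 0 < δ * (2 - (N:ℝ) - k - δ) := mul_pos_of_neg_of_neg hδ0 (by linarith)
  set C := δ * (2 - (N:ℝ) - k - δ) with hCdef
  have hεp : ε ^ (p - 1) < C := by
    have h := Real.rpow_lt_rpow hε₁.le hε₂ hp1'
    rwa [← Real.rpow_mul hC.le, one_div_mul_cancel hp1'.ne', Real.rpow_one] at h
  have hεpow : ε ^ p = ε * ε ^ (p - 1) := by
    rw [show p = 1 + (p - 1) by ring]
    rw [Real.rpow_add hε₁, Real.rpow_one]
    ring_nf
  have hexp : σ + δ * p ≤ δ - 2 := by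
    have h := (lt_div_iff₀ hp1').mp hδ₂
    nlinarith
  have hpow3 : (ε * ‖x‖ ^ δ) ^ p = ε ^ p * ‖x‖ ^ (δ * p) := by
    rw [Real.mul_rpow hε₁.le (Real.rpow_nonneg (norm_nonneg x) δ),
      ← Real.rpow_mul (norm_nonneg x)]
  have hmul : ‖x‖ ^ σ * ‖x‖ ^ (δ * p) = ‖x‖ ^ (σ + δ * p) := (Real.rpow_add hnx σ (δ*p)).symm
  have hle : ‖x‖ ^ (σ + δ * p) ≤ ‖x‖ ^ (δ - 2) := Real.rpow_le_rpow_of_exponent_le hx1 hexp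
  have hApos : 0 < ‖x‖ ^ (δ - 2) := Real.rpow_pos_of_pos hnx _
  have hBpos : 0 < ‖x‖ ^ (σ + δ * p) := Real.rpow_pos_of_pos hnx _
  rw [hpow3, show ‖x‖ ^ σ * (ε ^ p * ‖x‖ ^ (δ * p)) = ε ^ p * (‖x‖ ^ σ * ‖x‖ ^ (δ * p)) by ring,
    hmul]
  have f1 : ε ^ (p - 1) * ‖x‖ ^ (σ + δ * p) ≤ C * ‖x‖ ^ (δ - 2) :=
    mul_le_mul hεp.le hle hBpos.le hC.le
  have f2 : ε ^ p * ‖x‖ ^ (σ + δ * p) ≤ ε * (C * ‖x‖ ^ (δ - 2)) := by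
    rw [hεpow, mul_assoc]
    exact mul_le_mul_of_nonneg_left f1 hε₁.le
  have f3 : ε * δ * ((N:ℝ) + δ - 2) * ‖x‖ ^ (δ - 2) + k * (ε * δ * ‖x‖ ^ (δ - 2))
      = -(ε * (C * ‖x‖ ^ (δ - 2))) := by
    rw [hCdef]; ring
  linarith [f2, f3]
end
end
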